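/- For a nonzero complex number ζ, the set { ζ·ev_ζ((M_q(c₁,…,c_k))₁₁) + (1−ζ)·ev_ζ((M_q(c₁,…,c_k))₂₁) : k ≥ 1, c₁,…,c_k ≥ 2 } — that is, the set of values J_{r/s}(ζ) of the normalized Jones polynomials of rational links over all irreducible fractions r/s > 1 — is finite if and only if ζ is a primitive n-th root of unity for some n ∈ {2, 3, 4, 5, 6}. -/

import Mathlib

open LaurentPolynomial

/-- The matrix `R_q` over the Laurent polynomial ring `ℤ[q, q⁻¹]`. -/
noncomputable def Rq : Matrix (Fin 2) (Fin 2) (LaurentPolynomial ℤ) := !![T 1, 1; 0, 1]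

/-- The matrix `S_q` over the Laurent polynomial ring `ℤ[q, q⁻¹]`. -/
noncomputable def Sq : Matrix (Fin 2) (Fin 2) (LaurentPolynomial ℤ) :=
  !![0, -(T (-1)); 1, 0]

/-- The subgroup `G_q` of `GL(2, ℤ[q, q⁻¹])` generated by `R_q` and `S_q`. -/
noncomputable def Gq : Subgroup (Matrix.GeneralLinearGroup (Fin 2) (LaurentPolynomial ℤ)) :=
  Subgroup.closure {A : Matrix.GeneralLinearGroup (Fin 2) (LaurentPolynomial ℤ) |
    (A : Matrix (Fin 2) (Fin 2) (LaurentPolynomial ℤ)) = Rq ∨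
    (A : Matrix (Fin 2) (Fin 2) (LaurentPolynomial ℤ)) = Sq}

/-- Given units `RU`, `SU` (specializing `R_q`, `S_q`) and a list `c = [c₁, …, c_k]`,
the matrix `M_q(c₁, …, c_k) = R_q^{c₁} S_q ⋯ R_q^{c_k} S_q`. -/
noncomputable def Mq (RU SU : Matrix.GeneralLinearGroup (Fin 2) (LaurentPolynomial ℤ))
    (c : List ℕ) : Matrix.GeneralLinearGroup (Fin 2) (LaurentPolynomial ℤ) :=
  (c.map fun ci => RU ^ ci * SU).prod

/- ### Complex-side matrices -/

noncomputable def Rc (z : ℂ) : Matrix (Fin 2) (Fin 2) ℂ := !![z, 1; 0, 1]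
noncomputable def Sc (z : ℂ) : Matrix (Fin 2) (Fin 2) ℂ := !![0, -z⁻¹; 1, 0]
noncomputable def Nc (z : ℂ) (c : List ℕ) : Matrix (Fin 2) (Fin 2) ℂ :=
  (c.map fun ci => Rc z ^ ci * Sc z).prod

lemma Nc_nil (z : ℂ) : Nc z [] = 1 := by simp [Nc]

lemma Nc_cons (z : ℂ) (a : ℕ) (c : List ℕ) :
    Nc z (a :: c) = (Rc z ^ a * Sc z) * Nc z c := by simp [Nc]

/- ### Evaluation lemma -/

lemma ev_T_neg_one (ev : LaurentPolynomial ℤ →+* ℂ) (z : ℂ) (hz : ev (T 1) = z) :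
    ev (T (-1)) = z⁻¹ := by
  have h : T (-1) * T 1 = (1 : LaurentPolynomial ℤ) := by
    rw [← T_add]; norm_num
  have h2 := congrArg ev h
  rw [_root_.map_mul, _root_.map_one, hz] at h2
  exact eq_inv_of_mul_eq_one_left h2

lemma ev_Rq (ev : LaurentPolynomial ℤ →+* ℂ) (z : ℂ) (hz : ev (T 1) = z) :
    ev.mapMatrix Rq = Rc z := by
  ext i j
  fin_cases i <;> fin_cases j <;>
    simp [Rq, Rc, RingHom.mapMatrix_apply, Matrix.map_apply, hz]

lemma ev_Sq (ev : LaurentPolynomial ℤ →+* ℂ) (z : ℂ) (hz : ev (T 1) = z) :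
    ev.mapMatrix Sq = Sc z := by
  have h1 := ev_T_neg_one ev z hz
  ext i j
  fin_cases i <;> fin_cases j <;>
    simp [Sq, Sc, RingHom.mapMatrix_apply, Matrix.map_apply, h1]

lemma ev_Mq (RU SU : Matrix.GeneralLinearGroup (Fin 2) (LaurentPolynomial ℤ))
    (hRU : (RU : Matrix (Fin 2) (Fin 2) (LaurentPolynomial ℤ)) = Rq)
    (hSU : (SU : Matrix (Fin 2) (Fin 2) (LaurentPolynomial ℤ)) = Sq)
    (ev : LaurentPolynomial ℤ →+* ℂ) (z : ℂ) (hz : ev (T 1) = z)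
    (c : List ℕ) :
    ev.mapMatrix ((Mq RU SU c : Matrix (Fin 2) (Fin 2) (LaurentPolynomial ℤ))) = Nc z c := by
  induction c with
  | nil => simp [Mq, Nc_nil]
  | cons a c ih =>
      have : (Mq RU SU (a :: c) : Matrix (Fin 2) (Fin 2) (LaurentPolynomial ℤ))
          = (Rq ^ a * Sq) * (Mq RU SU c : Matrix (Fin 2) (Fin 2) (LaurentPolynomial ℤ)) := by
        simp only [Mq, List.map_cons, List.prod_cons, Units.val_mul, Units.val_pow_eq_pow_val,
          hRU, hSU]
      rw [this, _root_.map_mul, ih, Nc_cons, _root_.map_mul, map_pow, ev_Rq ev z hz,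
        ev_Sq ev z hz]

lemma ev_entry (RU SU : Matrix.GeneralLinearGroup (Fin 2) (LaurentPolynomial ℤ))
    (hRU : (RU : Matrix (Fin 2) (Fin 2) (LaurentPolynomial ℤ)) = Rq)
    (hSU : (SU : Matrix (Fin 2) (Fin 2) (LaurentPolynomial ℤ)) = Sq)
    (ev : LaurentPolynomial ℤ →+* ℂ) (z : ℂ) (hz : ev (T 1) = z)
    (c : List ℕ) (i j : Fin 2) :
    ev ((Mq RU SU c : Matrix (Fin 2) (Fin 2) (LaurentPolynomial ℤ)) i j) = Nc z c i j := by
  have h := ev_Mq RU SU hRU hSU ev z hz c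
  calc ev ((Mq RU SU c : Matrix (Fin 2) (Fin 2) (LaurentPolynomial ℤ)) i j)
      = ev.mapMatrix ((Mq RU SU c : Matrix (Fin 2) (Fin 2) (LaurentPolynomial ℤ))) i j := rfl
    _ = Nc z c i j := by rw [h]

/- ### vecMul helpers -/

open Matrix

lemma vecMul2 (a b : ℂ) (M : Matrix (Fin 2) (Fin 2) ℂ) :
    Matrix.vecMul ![a, b] M = ![a * M 0 0 + b * M 1 0, a * M 0 1 + b * M 1 1] := by
  funext k
  fin_cases k <;> simp [Matrix.vecMul, dotProduct, Fin.sum_univ_two]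

lemma pair_eq {a b c d : ℂ} (h1 : a = c) (h2 : b = d) : ![a, b] = ![c, d] := by
  rw [h1, h2]

lemma vecMulR (z a b : ℂ) : Matrix.vecMul ![a, b] (Rc z) = ![a * z, a + b] := by
  rw [vecMul2]
  refine pair_eq (by simp [Rc]) (by simp [Rc])

lemma vecMulS (z a b : ℂ) : Matrix.vecMul ![a, b] (Sc z) = ![b, -(a * z⁻¹)] := by
  rw [vecMul2]; simp [Sc]

lemma mem_pair {v : Fin 2 → ℂ} {a b : ℂ} (h : v = ![a,b]) : ∃ p : ℂ × ℂ, v = ![p.1, p.2] :=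
  ⟨(a,b), h⟩

/- ### Orbit machinery -/

lemma orbit_closure (z : ℂ) (O : Set (Fin 2 → ℂ))
    (hR : ∀ v ∈ O, Matrix.vecMul v (Rc z) ∈ O)
    (hS : ∀ v ∈ O, Matrix.vecMul v (Sc z) ∈ O)
    (he : ![z, 1 - z] ∈ O) :
    ∀ c : List ℕ, Matrix.vecMul ![z, 1 - z] (Nc z c) ∈ O := by
  have hpow : ∀ (k : ℕ), ∀ v ∈ O, Matrix.vecMul v (Rc z ^ k) ∈ O := by
    intro k
    induction k with
    | zero => intro v hv; simpa using hv
    | succ k ih =>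
        intro v hv
        rw [pow_succ, ← Matrix.vecMul_vecMul]
        exact hR _ (ih v hv)
  have main : ∀ (c : List ℕ), ∀ v ∈ O, Matrix.vecMul v (Nc z c) ∈ O := by
    intro c
    induction c with
    | nil => intro v hv; simpa [Nc_nil] using hv
    | cons a c ih =>
        intro v hv
        rw [Nc_cons, ← Matrix.vecMul_vecMul, ← Matrix.vecMul_vecMul]
        exact ih _ (hS _ (hpow a v hv))
  exact fun c => main c _ he

/- ### Powers of Rc, geometric sums -/

lemma Rc_pow (z : ℂ) (m : ℕ) :
    Rc z ^ m = !![z ^ m, ∑ i ∈ Finset.range m, z ^ i; 0, 1] := by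
  induction m with
  | zero =>
      ext i j; fin_cases i <;> fin_cases j <;> simp
  | succ m ih =>
      rw [pow_succ, ih]
      ext i j
      fin_cases i <;> fin_cases j <;>
        simp [Rc, Matrix.mul_apply, Fin.sum_univ_two, Finset.sum_range_succ, pow_succ] <;> ring

lemma smul_pair (s a b : ℂ) : s • (![a, b] : Fin 2 → ℂ) = ![s * a, s * b] := by
  funext k; fin_cases k <;> simp

lemma pow_eq_one_finite (K : ℕ) (hK : 0 < K) : {s : ℂ | s ^ K = 1}.Finite := by
  refine Set.Finite.subset ((Polynomial.nthRoots K (1 : ℂ)).toFinset).finite_toSet ?_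
  intro s hs
  rw [Finset.mem_coe, Multiset.mem_toFinset, Polynomial.mem_nthRoots hK]
  exact hs
lemma orbit_fin_2 (z : ℂ) (hrel : z + 1 = 0) :
    ∃ O : Set (Fin 2 → ℂ), O.Finite ∧ (![z, 1 - z] ∈ O) ∧
      (∀ v ∈ O, Matrix.vecMul v (Rc z) ∈ O) ∧ (∀ v ∈ O, Matrix.vecMul v (Sc z) ∈ O) := by
  have hzi : z⁻¹ = (-1 : ℂ) := (eq_inv_of_mul_eq_one_left (by linear_combination ((-1 : ℂ)) * hrel)).symm
  refine ⟨(fun p : ℂ × (Fin 2 → ℂ) => p.1 • p.2) '' ({s : ℂ | s ^ 2 = 1} ×ˢ ({![(-1 : ℂ), (2 : ℂ)], ![(1 : ℂ), (1 : ℂ)], ![(2 : ℂ), (-1 : ℂ)]} : Set (Fin 2 → ℂ))), ?_, ?_, ?_, ?_⟩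
  · exact Set.Finite.image _ (Set.Finite.prod (pow_eq_one_finite 2 (by norm_num)) (Set.Finite.insert _ (Set.Finite.insert _ (Set.finite_singleton _))))
  · refine ⟨((1 : ℂ), ![(-1 : ℂ), (2 : ℂ)]), ⟨one_pow 2, Or.inl (rfl)⟩, ?_⟩
    show (1 : ℂ) • (![(-1 : ℂ), (2 : ℂ)]) = ![z, 1 - z]
    rw [one_smul]
    exact pair_eq (by linear_combination ((-1 : ℂ)) * hrel) (by linear_combination ((1 : ℂ)) * hrel)
  · rintro x ⟨⟨s, w⟩, ⟨hs, hw⟩, rfl⟩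
    have hs2 : s ^ 2 = 1 := hs
    simp only [Set.mem_insert_iff, Set.mem_singleton_iff] at hw
    rcases hw with rfl|rfl|rfl
    · refine ⟨(s * ((1 : ℂ)), ![(1 : ℂ), (1 : ℂ)]), ⟨by show (s * ((1 : ℂ))) ^ 2 = 1; rw [mul_pow, hs2, one_mul]; linear_combination ((0 : ℂ)) * hrel, Or.inr (Or.inl (rfl))⟩, ?_⟩
      show (s * ((1 : ℂ))) • (![(1 : ℂ), (1 : ℂ)]) = Matrix.vecMul ((s, (![(-1 : ℂ), (2 : ℂ)])).1 • (s, (![(-1 : ℂ), (2 : ℂ)])).2) (Rc z)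
      rw [Matrix.smul_vecMul, vecMulR, smul_pair, smul_pair]
      exact (pair_eq (by linear_combination (s * ((-1 : ℂ))) * hrel) (by linear_combination (s * ((0 : ℂ))) * hrel)).symm
    · refine ⟨(s * ((1 : ℂ)), ![(-1 : ℂ), (2 : ℂ)]), ⟨by show (s * ((1 : ℂ))) ^ 2 = 1; rw [mul_pow, hs2, one_mul]; linear_combination ((0 : ℂ)) * hrel, Or.inl (rfl)⟩, ?_⟩
      show (s * ((1 : ℂ))) • (![(-1 : ℂ), (2 : ℂ)]) = Matrix.vecMul ((s, (![(1 : ℂ), (1 : ℂ)])).1 • (s, (![(1 : ℂ), (1 : ℂ)])).2) (Rc z)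
      rw [Matrix.smul_vecMul, vecMulR, smul_pair, smul_pair]
      exact (pair_eq (by linear_combination (s * ((1 : ℂ))) * hrel) (by linear_combination (s * ((0 : ℂ))) * hrel)).symm
    · refine ⟨(s * ((-1 : ℂ)), ![(2 : ℂ), (-1 : ℂ)]), ⟨by show (s * ((-1 : ℂ))) ^ 2 = 1; rw [mul_pow, hs2, one_mul]; linear_combination ((0 : ℂ)) * hrel, Or.inr (Or.inr (rfl))⟩, ?_⟩
      show (s * ((-1 : ℂ))) • (![(2 : ℂ), (-1 : ℂ)]) = Matrix.vecMul ((s, (![(2 : ℂ), (-1 : ℂ)])).1 • (s, (![(2 : ℂ), (-1 : ℂ)])).2) (Rc z)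
      rw [Matrix.smul_vecMul, vecMulR, smul_pair, smul_pair]
      exact (pair_eq (by linear_combination (s * ((2 : ℂ))) * hrel) (by linear_combination (s * ((0 : ℂ))) * hrel)).symm
  · rintro x ⟨⟨s, w⟩, ⟨hs, hw⟩, rfl⟩
    have hs2 : s ^ 2 = 1 := hs
    simp only [Set.mem_insert_iff, Set.mem_singleton_iff] at hw
    rcases hw with rfl|rfl|rfl
    · refine ⟨(s * ((1 : ℂ)), ![(2 : ℂ), (-1 : ℂ)]), ⟨by show (s * ((1 : ℂ))) ^ 2 = 1; rw [mul_pow, hs2, one_mul]; linear_combination ((0 : ℂ)) * hrel, Or.inr (Or.inr (rfl))⟩, ?_⟩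
      show (s * ((1 : ℂ))) • (![(2 : ℂ), (-1 : ℂ)]) = Matrix.vecMul ((s, (![(-1 : ℂ), (2 : ℂ)])).1 • (s, (![(-1 : ℂ), (2 : ℂ)])).2) (Sc z)
      rw [Matrix.smul_vecMul, vecMulS, hzi, smul_pair, smul_pair]
      exact (pair_eq (by linear_combination (s * ((0 : ℂ))) * hrel) (by linear_combination (s * ((0 : ℂ))) * hrel)).symm
    · refine ⟨(s * ((1 : ℂ)), ![(1 : ℂ), (1 : ℂ)]), ⟨by show (s * ((1 : ℂ))) ^ 2 = 1; rw [mul_pow, hs2, one_mul]; linear_combination ((0 : ℂ)) * hrel, Or.inr (Or.inl (rfl))⟩, ?_⟩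
      show (s * ((1 : ℂ))) • (![(1 : ℂ), (1 : ℂ)]) = Matrix.vecMul ((s, (![(1 : ℂ), (1 : ℂ)])).1 • (s, (![(1 : ℂ), (1 : ℂ)])).2) (Sc z)
      rw [Matrix.smul_vecMul, vecMulS, hzi, smul_pair, smul_pair]
      exact (pair_eq (by linear_combination (s * ((0 : ℂ))) * hrel) (by linear_combination (s * ((0 : ℂ))) * hrel)).symm
    · refine ⟨(s * ((1 : ℂ)), ![(-1 : ℂ), (2 : ℂ)]), ⟨by show (s * ((1 : ℂ))) ^ 2 = 1; rw [mul_pow, hs2, one_mul]; linear_combination ((0 : ℂ)) * hrel, Or.inl (rfl)⟩, ?_⟩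
      show (s * ((1 : ℂ))) • (![(-1 : ℂ), (2 : ℂ)]) = Matrix.vecMul ((s, (![(2 : ℂ), (-1 : ℂ)])).1 • (s, (![(2 : ℂ), (-1 : ℂ)])).2) (Sc z)
      rw [Matrix.smul_vecMul, vecMulS, hzi, smul_pair, smul_pair]
      exact (pair_eq (by linear_combination (s * ((0 : ℂ))) * hrel) (by linear_combination (s * ((0 : ℂ))) * hrel)).symm

lemma orbit_fin_3 (z : ℂ) (hrel : z^2 + z + 1 = 0) :
    ∃ O : Set (Fin 2 → ℂ), O.Finite ∧ (![z, 1 - z] ∈ O) ∧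
      (∀ v ∈ O, Matrix.vecMul v (Rc z) ∈ O) ∧ (∀ v ∈ O, Matrix.vecMul v (Sc z) ∈ O) := by
  have hzi : z⁻¹ = (-1 : ℂ) + (-1 : ℂ) * z := (eq_inv_of_mul_eq_one_left (by linear_combination ((-1 : ℂ)) * hrel)).symm
  refine ⟨(fun p : ℂ × (Fin 2 → ℂ) => p.1 • p.2) '' ({s : ℂ | s ^ 6 = 1} ×ˢ ({![(1 : ℂ) * z, (1 : ℂ) + (-1 : ℂ) * z], ![(-1 : ℂ) + (-1 : ℂ) * z, (1 : ℂ)], ![(1 : ℂ) + (-1 : ℂ) * z, (-1 : ℂ)], ![(1 : ℂ), (-1 : ℂ) * z]} : Set (Fin 2 → ℂ))), ?_, ?_, ?_, ?_⟩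
  · exact Set.Finite.image _ (Set.Finite.prod (pow_eq_one_finite 6 (by norm_num)) (Set.Finite.insert _ (Set.Finite.insert _ (Set.Finite.insert _ (Set.finite_singleton _)))))
  · refine ⟨((1 : ℂ), ![(1 : ℂ) * z, (1 : ℂ) + (-1 : ℂ) * z]), ⟨one_pow 6, Or.inl (rfl)⟩, ?_⟩
    show (1 : ℂ) • (![(1 : ℂ) * z, (1 : ℂ) + (-1 : ℂ) * z]) = ![z, 1 - z]
    rw [one_smul]
    exact pair_eq (by linear_combination ((0 : ℂ)) * hrel) (by linear_combination ((0 : ℂ)) * hrel)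
  · rintro x ⟨⟨s, w⟩, ⟨hs, hw⟩, rfl⟩
    have hs2 : s ^ 6 = 1 := hs
    simp only [Set.mem_insert_iff, Set.mem_singleton_iff] at hw
    rcases hw with rfl|rfl|rfl|rfl
    · refine ⟨(s * ((1 : ℂ)), ![(-1 : ℂ) + (-1 : ℂ) * z, (1 : ℂ)]), ⟨by show (s * ((1 : ℂ))) ^ 6 = 1; rw [mul_pow, hs2, one_mul]; linear_combination ((0 : ℂ)) * hrel, Or.inr (Or.inl (rfl))⟩, ?_⟩
      show (s * ((1 : ℂ))) • (![(-1 : ℂ) + (-1 : ℂ) * z, (1 : ℂ)]) = Matrix.vecMul ((s, (![(1 : ℂ) * z, (1 : ℂ) + (-1 : ℂ) * z])).1 • (s, (![(1 : ℂ) * z, (1 : ℂ) + (-1 : ℂ) * z])).2) (Rc z)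
      rw [Matrix.smul_vecMul, vecMulR, smul_pair, smul_pair]
      exact (pair_eq (by linear_combination (s * ((1 : ℂ))) * hrel) (by linear_combination (s * ((0 : ℂ))) * hrel)).symm
    · refine ⟨(s * ((1 : ℂ)), ![(1 : ℂ), (-1 : ℂ) * z]), ⟨by show (s * ((1 : ℂ))) ^ 6 = 1; rw [mul_pow, hs2, one_mul]; linear_combination ((0 : ℂ)) * hrel, Or.inr (Or.inr (Or.inr (rfl)))⟩, ?_⟩
      show (s * ((1 : ℂ))) • (![(1 : ℂ), (-1 : ℂ) * z]) = Matrix.vecMul ((s, (![(-1 : ℂ) + (-1 : ℂ) * z, (1 : ℂ)])).1 • (s, (![(-1 : ℂ) + (-1 : ℂ) * z, (1 : ℂ)])).2) (Rc z)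
      rw [Matrix.smul_vecMul, vecMulR, smul_pair, smul_pair]
      exact (pair_eq (by linear_combination (s * ((-1 : ℂ))) * hrel) (by linear_combination (s * ((0 : ℂ))) * hrel)).symm
    · refine ⟨(s * ((1 : ℂ) * z), ![(1 : ℂ) + (-1 : ℂ) * z, (-1 : ℂ)]), ⟨by show (s * ((1 : ℂ) * z)) ^ 6 = 1; rw [mul_pow, hs2, one_mul]; linear_combination ((-1 : ℂ) + (1 : ℂ) * z + (-1 : ℂ) * z ^ 3 + (1 : ℂ) * z ^ 4) * hrel, Or.inr (Or.inr (Or.inl (rfl)))⟩, ?_⟩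
      show (s * ((1 : ℂ) * z)) • (![(1 : ℂ) + (-1 : ℂ) * z, (-1 : ℂ)]) = Matrix.vecMul ((s, (![(1 : ℂ) + (-1 : ℂ) * z, (-1 : ℂ)])).1 • (s, (![(1 : ℂ) + (-1 : ℂ) * z, (-1 : ℂ)])).2) (Rc z)
      rw [Matrix.smul_vecMul, vecMulR, smul_pair, smul_pair]
      exact (pair_eq (by linear_combination (s * ((0 : ℂ))) * hrel) (by linear_combination (s * ((0 : ℂ))) * hrel)).symm
    · refine ⟨(s * ((1 : ℂ)), ![(1 : ℂ) * z, (1 : ℂ) + (-1 : ℂ) * z]), ⟨by show (s * ((1 : ℂ))) ^ 6 = 1; rw [mul_pow, hs2, one_mul]; linear_combination ((0 : ℂ)) * hrel, Or.inl (rfl)⟩, ?_⟩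
      show (s * ((1 : ℂ))) • (![(1 : ℂ) * z, (1 : ℂ) + (-1 : ℂ) * z]) = Matrix.vecMul ((s, (![(1 : ℂ), (-1 : ℂ) * z])).1 • (s, (![(1 : ℂ), (-1 : ℂ) * z])).2) (Rc z)
      rw [Matrix.smul_vecMul, vecMulR, smul_pair, smul_pair]
      exact (pair_eq (by linear_combination (s * ((0 : ℂ))) * hrel) (by linear_combination (s * ((0 : ℂ))) * hrel)).symm
  · rintro x ⟨⟨s, w⟩, ⟨hs, hw⟩, rfl⟩
    have hs2 : s ^ 6 = 1 := hs
    simp only [Set.mem_insert_iff, Set.mem_singleton_iff] at hw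
    rcases hw with rfl|rfl|rfl|rfl
    · refine ⟨(s * ((1 : ℂ)), ![(1 : ℂ) + (-1 : ℂ) * z, (-1 : ℂ)]), ⟨by show (s * ((1 : ℂ))) ^ 6 = 1; rw [mul_pow, hs2, one_mul]; linear_combination ((0 : ℂ)) * hrel, Or.inr (Or.inr (Or.inl (rfl)))⟩, ?_⟩
      show (s * ((1 : ℂ))) • (![(1 : ℂ) + (-1 : ℂ) * z, (-1 : ℂ)]) = Matrix.vecMul ((s, (![(1 : ℂ) * z, (1 : ℂ) + (-1 : ℂ) * z])).1 • (s, (![(1 : ℂ) * z, (1 : ℂ) + (-1 : ℂ) * z])).2) (Sc z)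
      rw [Matrix.smul_vecMul, vecMulS, hzi, smul_pair, smul_pair]
      exact (pair_eq (by linear_combination (s * ((0 : ℂ))) * hrel) (by linear_combination (s * ((1 : ℂ))) * hrel)).symm
    · refine ⟨(s * ((1 : ℂ)), ![(1 : ℂ), (-1 : ℂ) * z]), ⟨by show (s * ((1 : ℂ))) ^ 6 = 1; rw [mul_pow, hs2, one_mul]; linear_combination ((0 : ℂ)) * hrel, Or.inr (Or.inr (Or.inr (rfl)))⟩, ?_⟩
      show (s * ((1 : ℂ))) • (![(1 : ℂ), (-1 : ℂ) * z]) = Matrix.vecMul ((s, (![(-1 : ℂ) + (-1 : ℂ) * z, (1 : ℂ)])).1 • (s, (![(-1 : ℂ) + (-1 : ℂ) * z, (1 : ℂ)])).2) (Sc z)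
      rw [Matrix.smul_vecMul, vecMulS, hzi, smul_pair, smul_pair]
      exact (pair_eq (by linear_combination (s * ((0 : ℂ))) * hrel) (by linear_combination (s * ((-1 : ℂ))) * hrel)).symm
    · refine ⟨(s * ((1 : ℂ) + (1 : ℂ) * z), ![(1 : ℂ) * z, (1 : ℂ) + (-1 : ℂ) * z]), ⟨by show (s * ((1 : ℂ) + (1 : ℂ) * z)) ^ 6 = 1; rw [mul_pow, hs2, one_mul]; linear_combination ((6 : ℂ) * z + (9 : ℂ) * z ^ 2 + (5 : ℂ) * z ^ 3 + (1 : ℂ) * z ^ 4) * hrel, Or.inl (rfl)⟩, ?_⟩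
      show (s * ((1 : ℂ) + (1 : ℂ) * z)) • (![(1 : ℂ) * z, (1 : ℂ) + (-1 : ℂ) * z]) = Matrix.vecMul ((s, (![(1 : ℂ) + (-1 : ℂ) * z, (-1 : ℂ)])).1 • (s, (![(1 : ℂ) + (-1 : ℂ) * z, (-1 : ℂ)])).2) (Sc z)
      rw [Matrix.smul_vecMul, vecMulS, hzi, smul_pair, smul_pair]
      exact (pair_eq (by linear_combination (s * ((-1 : ℂ))) * hrel) (by linear_combination (s * ((0 : ℂ))) * hrel)).symm
    · refine ⟨(s * ((1 : ℂ) + (1 : ℂ) * z), ![(-1 : ℂ) + (-1 : ℂ) * z, (1 : ℂ)]), ⟨by show (s * ((1 : ℂ) + (1 : ℂ) * z)) ^ 6 = 1; rw [mul_pow, hs2, one_mul]; linear_combination ((6 : ℂ) * z + (9 : ℂ) * z ^ 2 + (5 : ℂ) * z ^ 3 + (1 : ℂ) * z ^ 4) * hrel, Or.inr (Or.inl (rfl))⟩, ?_⟩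
      show (s * ((1 : ℂ) + (1 : ℂ) * z)) • (![(-1 : ℂ) + (-1 : ℂ) * z, (1 : ℂ)]) = Matrix.vecMul ((s, (![(1 : ℂ), (-1 : ℂ) * z])).1 • (s, (![(1 : ℂ), (-1 : ℂ) * z])).2) (Sc z)
      rw [Matrix.smul_vecMul, vecMulS, hzi, smul_pair, smul_pair]
      exact (pair_eq (by linear_combination (s * ((1 : ℂ))) * hrel) (by linear_combination (s * ((0 : ℂ))) * hrel)).symm

lemma orbit_fin_4 (z : ℂ) (hrel : z^2 + 1 = 0) :
    ∃ O : Set (Fin 2 → ℂ), O.Finite ∧ (![z, 1 - z] ∈ O) ∧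
      (∀ v ∈ O, Matrix.vecMul v (Rc z) ∈ O) ∧ (∀ v ∈ O, Matrix.vecMul v (Sc z) ∈ O) := by
  have hzi : z⁻¹ = (-1 : ℂ) * z := (eq_inv_of_mul_eq_one_left (by linear_combination ((-1 : ℂ)) * hrel)).symm
  refine ⟨(fun p : ℂ × (Fin 2 → ℂ) => p.1 • p.2) '' ({s : ℂ | s ^ 4 = 1} ×ˢ ({![(1 : ℂ) * z, (1 : ℂ) + (-1 : ℂ) * z], ![(-1 : ℂ), (1 : ℂ)], ![(1 : ℂ) + (-1 : ℂ) * z, (-1 : ℂ)], ![(-1 : ℂ) * z, (0 : ℂ)], ![(1 : ℂ), (-1 : ℂ) * z], ![(0 : ℂ), (1 : ℂ)]} : Set (Fin 2 → ℂ))), ?_, ?_, ?_, ?_⟩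
  · exact Set.Finite.image _ (Set.Finite.prod (pow_eq_one_finite 4 (by norm_num)) (Set.Finite.insert _ (Set.Finite.insert _ (Set.Finite.insert _ (Set.Finite.insert _ (Set.Finite.insert _ (Set.finite_singleton _)))))))
  · refine ⟨((1 : ℂ), ![(1 : ℂ) * z, (1 : ℂ) + (-1 : ℂ) * z]), ⟨one_pow 4, Or.inl (rfl)⟩, ?_⟩
    show (1 : ℂ) • (![(1 : ℂ) * z, (1 : ℂ) + (-1 : ℂ) * z]) = ![z, 1 - z]
    rw [one_smul]
    exact pair_eq (by linear_combination ((0 : ℂ)) * hrel) (by linear_combination ((0 : ℂ)) * hrel)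
  · rintro x ⟨⟨s, w⟩, ⟨hs, hw⟩, rfl⟩
    have hs2 : s ^ 4 = 1 := hs
    simp only [Set.mem_insert_iff, Set.mem_singleton_iff] at hw
    rcases hw with rfl|rfl|rfl|rfl|rfl|rfl
    · refine ⟨(s * ((1 : ℂ)), ![(-1 : ℂ), (1 : ℂ)]), ⟨by show (s * ((1 : ℂ))) ^ 4 = 1; rw [mul_pow, hs2, one_mul]; linear_combination ((0 : ℂ)) * hrel, Or.inr (Or.inl (rfl))⟩, ?_⟩
      show (s * ((1 : ℂ))) • (![(-1 : ℂ), (1 : ℂ)]) = Matrix.vecMul ((s, (![(1 : ℂ) * z, (1 : ℂ) + (-1 : ℂ) * z])).1 • (s, (![(1 : ℂ) * z, (1 : ℂ) + (-1 : ℂ) * z])).2) (Rc z)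
      rw [Matrix.smul_vecMul, vecMulR, smul_pair, smul_pair]
      exact (pair_eq (by linear_combination (s * ((1 : ℂ))) * hrel) (by linear_combination (s * ((0 : ℂ))) * hrel)).symm
    · refine ⟨(s * ((1 : ℂ)), ![(-1 : ℂ) * z, (0 : ℂ)]), ⟨by show (s * ((1 : ℂ))) ^ 4 = 1; rw [mul_pow, hs2, one_mul]; linear_combination ((0 : ℂ)) * hrel, Or.inr (Or.inr (Or.inr (Or.inl (rfl))))⟩, ?_⟩
      show (s * ((1 : ℂ))) • (![(-1 : ℂ) * z, (0 : ℂ)]) = Matrix.vecMul ((s, (![(-1 : ℂ), (1 : ℂ)])).1 • (s, (![(-1 : ℂ), (1 : ℂ)])).2) (Rc z)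
      rw [Matrix.smul_vecMul, vecMulR, smul_pair, smul_pair]
      exact (pair_eq (by linear_combination (s * ((0 : ℂ))) * hrel) (by linear_combination (s * ((0 : ℂ))) * hrel)).symm
    · refine ⟨(s * ((1 : ℂ) * z), ![(1 : ℂ) + (-1 : ℂ) * z, (-1 : ℂ)]), ⟨by show (s * ((1 : ℂ) * z)) ^ 4 = 1; rw [mul_pow, hs2, one_mul]; linear_combination ((-1 : ℂ) + (1 : ℂ) * z ^ 2) * hrel, Or.inr (Or.inr (Or.inl (rfl)))⟩, ?_⟩
      show (s * ((1 : ℂ) * z)) • (![(1 : ℂ) + (-1 : ℂ) * z, (-1 : ℂ)]) = Matrix.vecMul ((s, (![(1 : ℂ) + (-1 : ℂ) * z, (-1 : ℂ)])).1 • (s, (![(1 : ℂ) + (-1 : ℂ) * z, (-1 : ℂ)])).2) (Rc z)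
      rw [Matrix.smul_vecMul, vecMulR, smul_pair, smul_pair]
      exact (pair_eq (by linear_combination (s * ((0 : ℂ))) * hrel) (by linear_combination (s * ((0 : ℂ))) * hrel)).symm
    · refine ⟨(s * ((1 : ℂ)), ![(1 : ℂ), (-1 : ℂ) * z]), ⟨by show (s * ((1 : ℂ))) ^ 4 = 1; rw [mul_pow, hs2, one_mul]; linear_combination ((0 : ℂ)) * hrel, Or.inr (Or.inr (Or.inr (Or.inr (Or.inl (rfl)))))⟩, ?_⟩
      show (s * ((1 : ℂ))) • (![(1 : ℂ), (-1 : ℂ) * z]) = Matrix.vecMul ((s, (![(-1 : ℂ) * z, (0 : ℂ)])).1 • (s, (![(-1 : ℂ) * z, (0 : ℂ)])).2) (Rc z)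
      rw [Matrix.smul_vecMul, vecMulR, smul_pair, smul_pair]
      exact (pair_eq (by linear_combination (s * ((-1 : ℂ))) * hrel) (by linear_combination (s * ((0 : ℂ))) * hrel)).symm
    · refine ⟨(s * ((1 : ℂ)), ![(1 : ℂ) * z, (1 : ℂ) + (-1 : ℂ) * z]), ⟨by show (s * ((1 : ℂ))) ^ 4 = 1; rw [mul_pow, hs2, one_mul]; linear_combination ((0 : ℂ)) * hrel, Or.inl (rfl)⟩, ?_⟩
      show (s * ((1 : ℂ))) • (![(1 : ℂ) * z, (1 : ℂ) + (-1 : ℂ) * z]) = Matrix.vecMul ((s, (![(1 : ℂ), (-1 : ℂ) * z])).1 • (s, (![(1 : ℂ), (-1 : ℂ) * z])).2) (Rc z)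
      rw [Matrix.smul_vecMul, vecMulR, smul_pair, smul_pair]
      exact (pair_eq (by linear_combination (s * ((0 : ℂ))) * hrel) (by linear_combination (s * ((0 : ℂ))) * hrel)).symm
    · refine ⟨(s * ((1 : ℂ)), ![(0 : ℂ), (1 : ℂ)]), ⟨by show (s * ((1 : ℂ))) ^ 4 = 1; rw [mul_pow, hs2, one_mul]; linear_combination ((0 : ℂ)) * hrel, Or.inr (Or.inr (Or.inr (Or.inr (Or.inr (rfl)))))⟩, ?_⟩
      show (s * ((1 : ℂ))) • (![(0 : ℂ), (1 : ℂ)]) = Matrix.vecMul ((s, (![(0 : ℂ), (1 : ℂ)])).1 • (s, (![(0 : ℂ), (1 : ℂ)])).2) (Rc z)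
      rw [Matrix.smul_vecMul, vecMulR, smul_pair, smul_pair]
      exact (pair_eq (by linear_combination (s * ((0 : ℂ))) * hrel) (by linear_combination (s * ((0 : ℂ))) * hrel)).symm
  · rintro x ⟨⟨s, w⟩, ⟨hs, hw⟩, rfl⟩
    have hs2 : s ^ 4 = 1 := hs
    simp only [Set.mem_insert_iff, Set.mem_singleton_iff] at hw
    rcases hw with rfl|rfl|rfl|rfl|rfl|rfl
    · refine ⟨(s * ((1 : ℂ)), ![(1 : ℂ) + (-1 : ℂ) * z, (-1 : ℂ)]), ⟨by show (s * ((1 : ℂ))) ^ 4 = 1; rw [mul_pow, hs2, one_mul]; linear_combination ((0 : ℂ)) * hrel, Or.inr (Or.inr (Or.inl (rfl)))⟩, ?_⟩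
      show (s * ((1 : ℂ))) • (![(1 : ℂ) + (-1 : ℂ) * z, (-1 : ℂ)]) = Matrix.vecMul ((s, (![(1 : ℂ) * z, (1 : ℂ) + (-1 : ℂ) * z])).1 • (s, (![(1 : ℂ) * z, (1 : ℂ) + (-1 : ℂ) * z])).2) (Sc z)
      rw [Matrix.smul_vecMul, vecMulS, hzi, smul_pair, smul_pair]
      exact (pair_eq (by linear_combination (s * ((0 : ℂ))) * hrel) (by linear_combination (s * ((1 : ℂ))) * hrel)).symm
    · refine ⟨(s * ((1 : ℂ)), ![(1 : ℂ), (-1 : ℂ) * z]), ⟨by show (s * ((1 : ℂ))) ^ 4 = 1; rw [mul_pow, hs2, one_mul]; linear_combination ((0 : ℂ)) * hrel, Or.inr (Or.inr (Or.inr (Or.inr (Or.inl (rfl)))))⟩, ?_⟩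
      show (s * ((1 : ℂ))) • (![(1 : ℂ), (-1 : ℂ) * z]) = Matrix.vecMul ((s, (![(-1 : ℂ), (1 : ℂ)])).1 • (s, (![(-1 : ℂ), (1 : ℂ)])).2) (Sc z)
      rw [Matrix.smul_vecMul, vecMulS, hzi, smul_pair, smul_pair]
      exact (pair_eq (by linear_combination (s * ((0 : ℂ))) * hrel) (by linear_combination (s * ((0 : ℂ))) * hrel)).symm
    · refine ⟨(s * ((1 : ℂ) * z), ![(1 : ℂ) * z, (1 : ℂ) + (-1 : ℂ) * z]), ⟨by show (s * ((1 : ℂ) * z)) ^ 4 = 1; rw [mul_pow, hs2, one_mul]; linear_combination ((-1 : ℂ) + (1 : ℂ) * z ^ 2) * hrel, Or.inl (rfl)⟩, ?_⟩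
      show (s * ((1 : ℂ) * z)) • (![(1 : ℂ) * z, (1 : ℂ) + (-1 : ℂ) * z]) = Matrix.vecMul ((s, (![(1 : ℂ) + (-1 : ℂ) * z, (-1 : ℂ)])).1 • (s, (![(1 : ℂ) + (-1 : ℂ) * z, (-1 : ℂ)])).2) (Sc z)
      rw [Matrix.smul_vecMul, vecMulS, hzi, smul_pair, smul_pair]
      exact (pair_eq (by linear_combination (s * ((-1 : ℂ))) * hrel) (by linear_combination (s * ((0 : ℂ))) * hrel)).symm
    · refine ⟨(s * ((1 : ℂ)), ![(0 : ℂ), (1 : ℂ)]), ⟨by show (s * ((1 : ℂ))) ^ 4 = 1; rw [mul_pow, hs2, one_mul]; linear_combination ((0 : ℂ)) * hrel, Or.inr (Or.inr (Or.inr (Or.inr (Or.inr (rfl)))))⟩, ?_⟩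
      show (s * ((1 : ℂ))) • (![(0 : ℂ), (1 : ℂ)]) = Matrix.vecMul ((s, (![(-1 : ℂ) * z, (0 : ℂ)])).1 • (s, (![(-1 : ℂ) * z, (0 : ℂ)])).2) (Sc z)
      rw [Matrix.smul_vecMul, vecMulS, hzi, smul_pair, smul_pair]
      exact (pair_eq (by linear_combination (s * ((0 : ℂ))) * hrel) (by linear_combination (s * ((-1 : ℂ))) * hrel)).symm
    · refine ⟨(s * ((1 : ℂ) * z), ![(-1 : ℂ), (1 : ℂ)]), ⟨by show (s * ((1 : ℂ) * z)) ^ 4 = 1; rw [mul_pow, hs2, one_mul]; linear_combination ((-1 : ℂ) + (1 : ℂ) * z ^ 2) * hrel, Or.inr (Or.inl (rfl))⟩, ?_⟩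
      show (s * ((1 : ℂ) * z)) • (![(-1 : ℂ), (1 : ℂ)]) = Matrix.vecMul ((s, (![(1 : ℂ), (-1 : ℂ) * z])).1 • (s, (![(1 : ℂ), (-1 : ℂ) * z])).2) (Sc z)
      rw [Matrix.smul_vecMul, vecMulS, hzi, smul_pair, smul_pair]
      exact (pair_eq (by linear_combination (s * ((0 : ℂ))) * hrel) (by linear_combination (s * ((0 : ℂ))) * hrel)).symm
    · refine ⟨(s * ((1 : ℂ) * z), ![(-1 : ℂ) * z, (0 : ℂ)]), ⟨by show (s * ((1 : ℂ) * z)) ^ 4 = 1; rw [mul_pow, hs2, one_mul]; linear_combination ((-1 : ℂ) + (1 : ℂ) * z ^ 2) * hrel, Or.inr (Or.inr (Or.inr (Or.inl (rfl))))⟩, ?_⟩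
      show (s * ((1 : ℂ) * z)) • (![(-1 : ℂ) * z, (0 : ℂ)]) = Matrix.vecMul ((s, (![(0 : ℂ), (1 : ℂ)])).1 • (s, (![(0 : ℂ), (1 : ℂ)])).2) (Sc z)
      rw [Matrix.smul_vecMul, vecMulS, hzi, smul_pair, smul_pair]
      exact (pair_eq (by linear_combination (s * ((1 : ℂ))) * hrel) (by linear_combination (s * ((0 : ℂ))) * hrel)).symm

lemma orbit_fin_5 (z : ℂ) (hrel : z^4 + z^3 + z^2 + z + 1 = 0) :
    ∃ O : Set (Fin 2 → ℂ), O.Finite ∧ (![z, 1 - z] ∈ O) ∧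
      (∀ v ∈ O, Matrix.vecMul v (Rc z) ∈ O) ∧ (∀ v ∈ O, Matrix.vecMul v (Sc z) ∈ O) := by
  have hzi : z⁻¹ = (-1 : ℂ) + (-1 : ℂ) * z + (-1 : ℂ) * z ^ 2 + (-1 : ℂ) * z ^ 3 := (eq_inv_of_mul_eq_one_left (by linear_combination ((-1 : ℂ)) * hrel)).symm
  refine ⟨(fun p : ℂ × (Fin 2 → ℂ) => p.1 • p.2) '' ({s : ℂ | s ^ 10 = 1} ×ˢ ({![(1 : ℂ) * z, (1 : ℂ) + (-1 : ℂ) * z], ![(1 : ℂ) * z ^ 2, (1 : ℂ)], ![(1 : ℂ) + (-1 : ℂ) * z, (-1 : ℂ)], ![(1 : ℂ) * z ^ 3, (1 : ℂ) + (1 : ℂ) * z ^ 2], ![(1 : ℂ), (-1 : ℂ) * z], ![(-1 : ℂ) + (-1 : ℂ) * z + (-1 : ℂ) * z ^ 2 + (-1 : ℂ) * z ^ 3, (1 : ℂ) + (1 : ℂ) * z ^ 2 + (1 : ℂ) * z ^ 3], ![(1 : ℂ) + (1 : ℂ) * z ^ 2, (-1 : ℂ) * z ^ 2], ![(1 : ℂ)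 + (1 : ℂ) * z ^ 2 + (1 : ℂ) * z ^ 3, (-1 : ℂ) * z ^ 3], ![(-1 : ℂ) + (-1 : ℂ) * z ^ 2, (1 : ℂ) + (1 : ℂ) * z ^ 2], ![(-1 : ℂ) * z + (-1 : ℂ) * z ^ 3, (0 : ℂ)], ![(1 : ℂ) + (1 : ℂ) * z ^ 2, (-1 : ℂ) + (-1 : ℂ) * z ^ 2 + (-1 : ℂ) * z ^ 3], ![(0 : ℂ), (1 : ℂ) + (1 : ℂ) * z ^ 2]} : Set (Fin 2 → ℂ))), ?_, ?_, ?_, ?_⟩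
  · exact Set.Finite.image _ (Set.Finite.prod (pow_eq_one_finite 10 (by norm_num)) (Set.Finite.insert _ (Set.Finite.insert _ (Set.Finite.insert _ (Set.Finite.insert _ (Set.Finite.insert _ (Set.Finite.insert _ (Set.Finite.insert _ (Set.Finite.insert _ (Set.Finite.insert _ (Set.Finite.insert _ (Set.Finite.insert _ (Set.finite_singleton _)))))))))))))
  · refine ⟨((1 : ℂ), ![(1 : ℂ) * z, (1 : ℂ) + (-1 : ℂ) * z]), ⟨one_pow 10, Or.inl (rfl)⟩, ?_⟩
    show (1 : ℂ) • (![(1 : ℂ) * z, (1 : ℂ) + (-1 : ℂ) * z]) = ![z, 1 - z]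
    rw [one_smul]
    exact pair_eq (by linear_combination ((0 : ℂ)) * hrel) (by linear_combination ((0 : ℂ)) * hrel)
  · rintro x ⟨⟨s, w⟩, ⟨hs, hw⟩, rfl⟩
    have hs2 : s ^ 10 = 1 := hs
    simp only [Set.mem_insert_iff, Set.mem_singleton_iff] at hw
    rcases hw with rfl|rfl|rfl|rfl|rfl|rfl|rfl|rfl|rfl|rfl|rfl|rfl
    · refine ⟨(s * ((1 : ℂ)), ![(1 : ℂ) * z ^ 2, (1 : ℂ)]), ⟨by show (s * ((1 : ℂ))) ^ 10 = 1; rw [mul_pow, hs2, one_mul]; linear_combination ((0 : ℂ)) * hrel, Or.inr (Or.inl (rfl))⟩, ?_⟩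
      show (s * ((1 : ℂ))) • (![(1 : ℂ) * z ^ 2, (1 : ℂ)]) = Matrix.vecMul ((s, (![(1 : ℂ) * z, (1 : ℂ) + (-1 : ℂ) * z])).1 • (s, (![(1 : ℂ) * z, (1 : ℂ) + (-1 : ℂ) * z])).2) (Rc z)
      rw [Matrix.smul_vecMul, vecMulR, smul_pair, smul_pair]
      exact (pair_eq (by linear_combination (s * ((0 : ℂ))) * hrel) (by linear_combination (s * ((0 : ℂ))) * hrel)).symm
    · refine ⟨(s * ((1 : ℂ)), ![(1 : ℂ) * z ^ 3, (1 : ℂ) + (1 : ℂ) * z ^ 2]), ⟨by show (s * ((1 : ℂ))) ^ 10 = 1; rw [mul_pow, hs2, one_mul]; linear_combination ((0 : ℂ)) * hrel, Or.inr (Or.inr (Or.inr (Or.inl (rfl))))⟩, ?_⟩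
      show (s * ((1 : ℂ))) • (![(1 : ℂ) * z ^ 3, (1 : ℂ) + (1 : ℂ) * z ^ 2]) = Matrix.vecMul ((s, (![(1 : ℂ) * z ^ 2, (1 : ℂ)])).1 • (s, (![(1 : ℂ) * z ^ 2, (1 : ℂ)])).2) (Rc z)
      rw [Matrix.smul_vecMul, vecMulR, smul_pair, smul_pair]
      exact (pair_eq (by linear_combination (s * ((0 : ℂ))) * hrel) (by linear_combination (s * ((0 : ℂ))) * hrel)).symm
    · refine ⟨(s * ((1 : ℂ) * z), ![(1 : ℂ) + (-1 : ℂ) * z, (-1 : ℂ)]), ⟨by show (s * ((1 : ℂ) * z)) ^ 10 = 1; rw [mul_pow, hs2, one_mul]; linear_combination ((-1 : ℂ) + (1 : ℂ) * z + (-1 : ℂ) * z ^ 5 + (1 : ℂ) * z ^ 6) * hrel, Or.inr (Or.inr (Or.inl (rfl)))⟩, ?_⟩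
      show (s * ((1 : ℂ) * z)) • (![(1 : ℂ) + (-1 : ℂ) * z, (-1 : ℂ)]) = Matrix.vecMul ((s, (![(1 : ℂ) + (-1 : ℂ) * z, (-1 : ℂ)])).1 • (s, (![(1 : ℂ) + (-1 : ℂ) * z, (-1 : ℂ)])).2) (Rc z)
      rw [Matrix.smul_vecMul, vecMulR, smul_pair, smul_pair]
      exact (pair_eq (by linear_combination (s * ((0 : ℂ))) * hrel) (by linear_combination (s * ((0 : ℂ))) * hrel)).symm
    · refine ⟨(s * ((1 : ℂ)), ![(-1 : ℂ) + (-1 : ℂ) * z + (-1 : ℂ) * z ^ 2 + (-1 : ℂ) * z ^ 3, (1 : ℂ) + (1 : ℂ) * z ^ 2 + (1 : ℂ) * z ^ 3]), ⟨by show (s * ((1 : ℂ))) ^ 10 = 1; rw [mul_pow, hs2, one_mul]; linear_combination ((0 : ℂ)) * hrel, Or.inr (Or.inr (Or.inr (Or.inr (Or.inr (Or.inl (rfl))))))⟩, ?_⟩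
      show (s * ((1 : ℂ))) • (![(-1 : ℂ) + (-1 : ℂ) * z + (-1 : ℂ) * z ^ 2 + (-1 : ℂ) * z ^ 3, (1 : ℂ) + (1 : ℂ) * z ^ 2 + (1 : ℂ) * z ^ 3]) = Matrix.vecMul ((s, (![(1 : ℂ) * z ^ 3, (1 : ℂ) + (1 : ℂ) * z ^ 2])).1 • (s, (![(1 : ℂ) * z ^ 3, (1 : ℂ) + (1 : ℂ) * z ^ 2])).2) (Rc z)
      rw [Matrix.smul_vecMul, vecMulR, smul_pair, smul_pair]
      exact (pair_eq (by linear_combination (s * ((1 : ℂ))) * hrel) (by linear_combination (s * ((0 : ℂ))) * hrel)).symm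
    · refine ⟨(s * ((1 : ℂ)), ![(1 : ℂ) * z, (1 : ℂ) + (-1 : ℂ) * z]), ⟨by show (s * ((1 : ℂ))) ^ 10 = 1; rw [mul_pow, hs2, one_mul]; linear_combination ((0 : ℂ)) * hrel, Or.inl (rfl)⟩, ?_⟩
      show (s * ((1 : ℂ))) • (![(1 : ℂ) * z, (1 : ℂ) + (-1 : ℂ) * z]) = Matrix.vecMul ((s, (![(1 : ℂ), (-1 : ℂ) * z])).1 • (s, (![(1 : ℂ), (-1 : ℂ) * z])).2) (Rc z)
      rw [Matrix.smul_vecMul, vecMulR, smul_pair, smul_pair]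
      exact (pair_eq (by linear_combination (s * ((0 : ℂ))) * hrel) (by linear_combination (s * ((0 : ℂ))) * hrel)).symm
    · refine ⟨(s * ((1 : ℂ)), ![(1 : ℂ), (-1 : ℂ) * z]), ⟨by show (s * ((1 : ℂ))) ^ 10 = 1; rw [mul_pow, hs2, one_mul]; linear_combination ((0 : ℂ)) * hrel, Or.inr (Or.inr (Or.inr (Or.inr (Or.inl (rfl)))))⟩, ?_⟩
      show (s * ((1 : ℂ))) • (![(1 : ℂ), (-1 : ℂ) * z]) = Matrix.vecMul ((s, (![(-1 : ℂ) + (-1 : ℂ) * z + (-1 : ℂ) * z ^ 2 + (-1 : ℂ) * z ^ 3, (1 : ℂ) + (1 : ℂ) * z ^ 2 + (1 : ℂ) * z ^ 3])).1 • (s, (![(-1 : ℂ) + (-1 : ℂ) * z + (-1 : ℂ) * z ^ 2 + (-1 : ℂ) * z ^ 3, (1 : ℂ) + (1 : ℂ) * z ^ 2 + (1 : ℂ) * z ^ 3])).2) (Rc z)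
      rw [Matrix.smul_vecMul, vecMulR, smul_pair, smul_pair]
      exact (pair_eq (by linear_combination (s * ((-1 : ℂ))) * hrel) (by linear_combination (s * ((0 : ℂ))) * hrel)).symm
    · refine ⟨(s * ((-1 : ℂ) * z ^ 2), ![(1 : ℂ) + (1 : ℂ) * z ^ 2 + (1 : ℂ) * z ^ 3, (-1 : ℂ) * z ^ 3]), ⟨by show (s * ((-1 : ℂ) * z ^ 2)) ^ 10 = 1; rw [mul_pow, hs2, one_mul]; linear_combination ((-1 : ℂ) + (1 : ℂ) * z + (-1 : ℂ) * z ^ 5 + (1 : ℂ) * z ^ 6 + (-1 : ℂ) * z ^ 10 + (1 : ℂ) * z ^ 11 + (-1 : ℂ) * z ^ 15 + (1 : ℂ) * z ^ 16) * hrel, Or.inr (Or.inr (Or.inr (Or.inr (Or.inr (Or.inr (Or.inr (Or.inl (rfl))))))))⟩, ?_⟩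
      show (s * ((-1 : ℂ) * z ^ 2)) • (![(1 : ℂ) + (1 : ℂ) * z ^ 2 + (1 : ℂ) * z ^ 3, (-1 : ℂ) * z ^ 3]) = Matrix.vecMul ((s, (![(1 : ℂ) + (1 : ℂ) * z ^ 2, (-1 : ℂ) * z ^ 2])).1 • (s, (![(1 : ℂ) + (1 : ℂ) * z ^ 2, (-1 : ℂ) * z ^ 2])).2) (Rc z)
      rw [Matrix.smul_vecMul, vecMulR, smul_pair, smul_pair]
      exact (pair_eq (by linear_combination (s * ((1 : ℂ) * z)) * hrel) (by linear_combination (s * ((1 : ℂ) + (-1 : ℂ) * z)) * hrel)).symm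
    · refine ⟨(s * ((1 : ℂ)), ![(-1 : ℂ) + (-1 : ℂ) * z ^ 2, (1 : ℂ) + (1 : ℂ) * z ^ 2]), ⟨by show (s * ((1 : ℂ))) ^ 10 = 1; rw [mul_pow, hs2, one_mul]; linear_combination ((0 : ℂ)) * hrel, Or.inr (Or.inr (Or.inr (Or.inr (Or.inr (Or.inr (Or.inr (Or.inr (Or.inl (rfl)))))))))⟩, ?_⟩
      show (s * ((1 : ℂ))) • (![(-1 : ℂ) + (-1 : ℂ) * z ^ 2, (1 : ℂ) + (1 : ℂ) * z ^ 2]) = Matrix.vecMul ((s, (![(1 : ℂ) + (1 : ℂ) * z ^ 2 + (1 : ℂ) * z ^ 3, (-1 : ℂ) * z ^ 3])).1 • (s, (![(1 : ℂ) + (1 : ℂ) * z ^ 2 + (1 : ℂ) * z ^ 3, (-1 : ℂ) * z ^ 3])).2) (Rc z)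
      rw [Matrix.smul_vecMul, vecMulR, smul_pair, smul_pair]
      exact (pair_eq (by linear_combination (s * ((1 : ℂ))) * hrel) (by linear_combination (s * ((0 : ℂ))) * hrel)).symm
    · refine ⟨(s * ((1 : ℂ)), ![(-1 : ℂ) * z + (-1 : ℂ) * z ^ 3, (0 : ℂ)]), ⟨by show (s * ((1 : ℂ))) ^ 10 = 1; rw [mul_pow, hs2, one_mul]; linear_combination ((0 : ℂ)) * hrel, Or.inr (Or.inr (Or.inr (Or.inr (Or.inr (Or.inr (Or.inr (Or.inr (Or.inr (Or.inl (rfl))))))))))⟩, ?_⟩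
      show (s * ((1 : ℂ))) • (![(-1 : ℂ) * z + (-1 : ℂ) * z ^ 3, (0 : ℂ)]) = Matrix.vecMul ((s, (![(-1 : ℂ) + (-1 : ℂ) * z ^ 2, (1 : ℂ) + (1 : ℂ) * z ^ 2])).1 • (s, (![(-1 : ℂ) + (-1 : ℂ) * z ^ 2, (1 : ℂ) + (1 : ℂ) * z ^ 2])).2) (Rc z)
      rw [Matrix.smul_vecMul, vecMulR, smul_pair, smul_pair]
      exact (pair_eq (by linear_combination (s * ((0 : ℂ))) * hrel) (by linear_combination (s * ((0 : ℂ))) * hrel)).symm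
    · refine ⟨(s * ((-1 : ℂ) * z ^ 2), ![(1 : ℂ) + (1 : ℂ) * z ^ 2, (-1 : ℂ) + (-1 : ℂ) * z ^ 2 + (-1 : ℂ) * z ^ 3]), ⟨by show (s * ((-1 : ℂ) * z ^ 2)) ^ 10 = 1; rw [mul_pow, hs2, one_mul]; linear_combination ((-1 : ℂ) + (1 : ℂ) * z + (-1 : ℂ) * z ^ 5 + (1 : ℂ) * z ^ 6 + (-1 : ℂ) * z ^ 10 + (1 : ℂ) * z ^ 11 + (-1 : ℂ) * z ^ 15 + (1 : ℂ) * z ^ 16) * hrel, Or.inr (Or.inr (Or.inr (Or.inr (Or.inr (Or.inr (Or.inr (Or.inr (Or.inr (Or.inr (Or.inl (rfl)))))))))))⟩, ?_⟩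
      show (s * ((-1 : ℂ) * z ^ 2)) • (![(1 : ℂ) + (1 : ℂ) * z ^ 2, (-1 : ℂ) + (-1 : ℂ) * z ^ 2 + (-1 : ℂ) * z ^ 3]) = Matrix.vecMul ((s, (![(-1 : ℂ) * z + (-1 : ℂ) * z ^ 3, (0 : ℂ)])).1 • (s, (![(-1 : ℂ) * z + (-1 : ℂ) * z ^ 3, (0 : ℂ)])).2) (Rc z)
      rw [Matrix.smul_vecMul, vecMulR, smul_pair, smul_pair]
      exact (pair_eq (by linear_combination (s * ((0 : ℂ))) * hrel) (by linear_combination (s * ((-1 : ℂ) * z)) * hrel)).symm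
    · refine ⟨(s * ((1 : ℂ) * z), ![(1 : ℂ) + (1 : ℂ) * z ^ 2, (-1 : ℂ) * z ^ 2]), ⟨by show (s * ((1 : ℂ) * z)) ^ 10 = 1; rw [mul_pow, hs2, one_mul]; linear_combination ((-1 : ℂ) + (1 : ℂ) * z + (-1 : ℂ) * z ^ 5 + (1 : ℂ) * z ^ 6) * hrel, Or.inr (Or.inr (Or.inr (Or.inr (Or.inr (Or.inr (Or.inl (rfl)))))))⟩, ?_⟩
      show (s * ((1 : ℂ) * z)) • (![(1 : ℂ) + (1 : ℂ) * z ^ 2, (-1 : ℂ) * z ^ 2]) = Matrix.vecMul ((s, (![(1 : ℂ) + (1 : ℂ) * z ^ 2, (-1 : ℂ) + (-1 : ℂ) * z ^ 2 + (-1 : ℂ) * z ^ 3])).1 • (s, (![(1 : ℂ) + (1 : ℂ) * z ^ 2, (-1 : ℂ) + (-1 : ℂ) * z ^ 2 + (-1 : ℂ) * z ^ 3])).2) (Rc z)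
      rw [Matrix.smul_vecMul, vecMulR, smul_pair, smul_pair]
      exact (pair_eq (by linear_combination (s * ((0 : ℂ))) * hrel) (by linear_combination (s * ((0 : ℂ))) * hrel)).symm
    · refine ⟨(s * ((1 : ℂ)), ![(0 : ℂ), (1 : ℂ) + (1 : ℂ) * z ^ 2]), ⟨by show (s * ((1 : ℂ))) ^ 10 = 1; rw [mul_pow, hs2, one_mul]; linear_combination ((0 : ℂ)) * hrel, Or.inr (Or.inr (Or.inr (Or.inr (Or.inr (Or.inr (Or.inr (Or.inr (Or.inr (Or.inr (Or.inr (rfl)))))))))))⟩, ?_⟩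
      show (s * ((1 : ℂ))) • (![(0 : ℂ), (1 : ℂ) + (1 : ℂ) * z ^ 2]) = Matrix.vecMul ((s, (![(0 : ℂ), (1 : ℂ) + (1 : ℂ) * z ^ 2])).1 • (s, (![(0 : ℂ), (1 : ℂ) + (1 : ℂ) * z ^ 2])).2) (Rc z)
      rw [Matrix.smul_vecMul, vecMulR, smul_pair, smul_pair]
      exact (pair_eq (by linear_combination (s * ((0 : ℂ))) * hrel) (by linear_combination (s * ((0 : ℂ))) * hrel)).symm
  · rintro x ⟨⟨s, w⟩, ⟨hs, hw⟩, rfl⟩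
    have hs2 : s ^ 10 = 1 := hs
    simp only [Set.mem_insert_iff, Set.mem_singleton_iff] at hw
    rcases hw with rfl|rfl|rfl|rfl|rfl|rfl|rfl|rfl|rfl|rfl|rfl|rfl
    · refine ⟨(s * ((1 : ℂ)), ![(1 : ℂ) + (-1 : ℂ) * z, (-1 : ℂ)]), ⟨by show (s * ((1 : ℂ))) ^ 10 = 1; rw [mul_pow, hs2, one_mul]; linear_combination ((0 : ℂ)) * hrel, Or.inr (Or.inr (Or.inl (rfl)))⟩, ?_⟩
      show (s * ((1 : ℂ))) • (![(1 : ℂ) + (-1 : ℂ) * z, (-1 : ℂ)]) = Matrix.vecMul ((s, (![(1 : ℂ) * z, (1 : ℂ) + (-1 : ℂ) * z])).1 • (s, (![(1 : ℂ) * z, (1 : ℂ) + (-1 : ℂ) * z])).2) (Sc z)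
      rw [Matrix.smul_vecMul, vecMulS, hzi, smul_pair, smul_pair]
      exact (pair_eq (by linear_combination (s * ((0 : ℂ))) * hrel) (by linear_combination (s * ((1 : ℂ))) * hrel)).symm
    · refine ⟨(s * ((1 : ℂ)), ![(1 : ℂ), (-1 : ℂ) * z]), ⟨by show (s * ((1 : ℂ))) ^ 10 = 1; rw [mul_pow, hs2, one_mul]; linear_combination ((0 : ℂ)) * hrel, Or.inr (Or.inr (Or.inr (Or.inr (Or.inl (rfl)))))⟩, ?_⟩
      show (s * ((1 : ℂ))) • (![(1 : ℂ), (-1 : ℂ) * z]) = Matrix.vecMul ((s, (![(1 : ℂ) * z ^ 2, (1 : ℂ)])).1 • (s, (![(1 : ℂ) * z ^ 2, (1 : ℂ)])).2) (Sc z)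
      rw [Matrix.smul_vecMul, vecMulS, hzi, smul_pair, smul_pair]
      exact (pair_eq (by linear_combination (s * ((0 : ℂ))) * hrel) (by linear_combination (s * ((1 : ℂ) * z)) * hrel)).symm
    · refine ⟨(s * ((1 : ℂ) + (1 : ℂ) * z + (1 : ℂ) * z ^ 2 + (1 : ℂ) * z ^ 3), ![(1 : ℂ) * z, (1 : ℂ) + (-1 : ℂ) * z]), ⟨by show (s * ((1 : ℂ) + (1 : ℂ) * z + (1 : ℂ) * z ^ 2 + (1 : ℂ) * z ^ 3)) ^ 10 = 1; rw [mul_pow, hs2, one_mul]; linear_combination ((10 : ℂ) * z + (45 : ℂ) * z ^ 2 + (165 : ℂ) * z ^ 3 + (485 : ℂ) * z ^ 4 + (1197 : ℂ) * z ^ 5 + (2563 : ℂ) * z ^ 6 + (4830 : ℂ) * z ^ 7 + (8130 : ℂ) * z ^ 8 + (12330 : ℂ) * z ^ 9 + (16950 : ℂ) * z ^ 10 + (21220 : ℂ) * z ^ 11 + (24255 : ℂ) * z ^ 12 + (25355 : ℂ) * z ^ 13 + (24255 : ℂ) * z ^ 14 + (21219 : ℂ) * z ^ 15 + (16951 : ℂ)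 * z ^ 16 + (12330 : ℂ) * z ^ 17 + (8130 : ℂ) * z ^ 18 + (4830 : ℂ) * z ^ 19 + (2562 : ℂ) * z ^ 20 + (1198 : ℂ) * z ^ 21 + (485 : ℂ) * z ^ 22 + (165 : ℂ) * z ^ 23 + (45 : ℂ) * z ^ 24 + (9 : ℂ) * z ^ 25 + (1 : ℂ) * z ^ 26) * hrel, Or.inl (rfl)⟩, ?_⟩
      show (s * ((1 : ℂ) + (1 : ℂ) * z + (1 : ℂ) * z ^ 2 + (1 : ℂ) * z ^ 3)) • (![(1 : ℂ) * z, (1 : ℂ) + (-1 : ℂ) * z]) = Matrix.vecMul ((s, (![(1 : ℂ) + (-1 : ℂ) * z, (-1 : ℂ)])).1 • (s, (![(1 : ℂ) + (-1 : ℂ) * z, (-1 : ℂ)])).2) (Sc z)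
      rw [Matrix.smul_vecMul, vecMulS, hzi, smul_pair, smul_pair]
      exact (pair_eq (by linear_combination (s * ((-1 : ℂ))) * hrel) (by linear_combination (s * ((0 : ℂ))) * hrel)).symm
    · refine ⟨(s * ((1 : ℂ)), ![(1 : ℂ) + (1 : ℂ) * z ^ 2, (-1 : ℂ) * z ^ 2]), ⟨by show (s * ((1 : ℂ))) ^ 10 = 1; rw [mul_pow, hs2, one_mul]; linear_combination ((0 : ℂ)) * hrel, Or.inr (Or.inr (Or.inr (Or.inr (Or.inr (Or.inr (Or.inl (rfl)))))))⟩, ?_⟩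
      show (s * ((1 : ℂ))) • (![(1 : ℂ) + (1 : ℂ) * z ^ 2, (-1 : ℂ) * z ^ 2]) = Matrix.vecMul ((s, (![(1 : ℂ) * z ^ 3, (1 : ℂ) + (1 : ℂ) * z ^ 2])).1 • (s, (![(1 : ℂ) * z ^ 3, (1 : ℂ) + (1 : ℂ) * z ^ 2])).2) (Sc z)
      rw [Matrix.smul_vecMul, vecMulS, hzi, smul_pair, smul_pair]
      exact (pair_eq (by linear_combination (s * ((0 : ℂ))) * hrel) (by linear_combination (s * ((1 : ℂ) * z ^ 2)) * hrel)).symm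
    · refine ⟨(s * ((1 : ℂ) + (1 : ℂ) * z + (1 : ℂ) * z ^ 2 + (1 : ℂ) * z ^ 3), ![(1 : ℂ) * z ^ 2, (1 : ℂ)]), ⟨by show (s * ((1 : ℂ) + (1 : ℂ) * z + (1 : ℂ) * z ^ 2 + (1 : ℂ) * z ^ 3)) ^ 10 = 1; rw [mul_pow, hs2, one_mul]; linear_combination ((10 : ℂ) * z + (45 : ℂ) * z ^ 2 + (165 : ℂ) * z ^ 3 + (485 : ℂ) * z ^ 4 + (1197 : ℂ) * z ^ 5 + (2563 : ℂ) * z ^ 6 + (4830 : ℂ) * z ^ 7 + (8130 : ℂ) * z ^ 8 + (12330 : ℂ) * z ^ 9 + (16950 : ℂ) * z ^ 10 + (21220 : ℂ) * z ^ 11 + (24255 : ℂ) * z ^ 12 + (25355 : ℂ) * z ^ 13 + (24255 : ℂ) * z ^ 14 + (21219 : ℂ) * z ^ 15 + (16951 : ℂ) * z ^ 16 + (12330 : ℂ) * z ^ 17 + (8130 : ℂ) * z ^ 18 + (4830 : ℂ) * z ^ 19 + (2562 : ℂ) * z ^ 20 + (1198 : ℂ) * z ^ 21 + (485 : ℂ)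 * z ^ 22 + (165 : ℂ) * z ^ 23 + (45 : ℂ) * z ^ 24 + (9 : ℂ) * z ^ 25 + (1 : ℂ) * z ^ 26) * hrel, Or.inr (Or.inl (rfl))⟩, ?_⟩
      show (s * ((1 : ℂ) + (1 : ℂ) * z + (1 : ℂ) * z ^ 2 + (1 : ℂ) * z ^ 3)) • (![(1 : ℂ) * z ^ 2, (1 : ℂ)]) = Matrix.vecMul ((s, (![(1 : ℂ), (-1 : ℂ) * z])).1 • (s, (![(1 : ℂ), (-1 : ℂ) * z])).2) (Sc z)
      rw [Matrix.smul_vecMul, vecMulS, hzi, smul_pair, smul_pair]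
      exact (pair_eq (by linear_combination (s * ((-1 : ℂ) * z)) * hrel) (by linear_combination (s * ((0 : ℂ))) * hrel)).symm
    · refine ⟨(s * ((1 : ℂ)), ![(1 : ℂ) + (1 : ℂ) * z ^ 2 + (1 : ℂ) * z ^ 3, (-1 : ℂ) * z ^ 3]), ⟨by show (s * ((1 : ℂ))) ^ 10 = 1; rw [mul_pow, hs2, one_mul]; linear_combination ((0 : ℂ)) * hrel, Or.inr (Or.inr (Or.inr (Or.inr (Or.inr (Or.inr (Or.inr (Or.inl (rfl))))))))⟩, ?_⟩
      show (s * ((1 : ℂ))) • (![(1 : ℂ) + (1 : ℂ) * z ^ 2 + (1 : ℂ) * z ^ 3, (-1 : ℂ) * z ^ 3]) = Matrix.vecMul ((s, (![(-1 : ℂ) + (-1 : ℂ) * z + (-1 : ℂ) * z ^ 2 + (-1 : ℂ) * z ^ 3, (1 : ℂ) + (1 : ℂ) * z ^ 2 + (1 : ℂ) * z ^ 3])).1 • (s, (![(-1 : ℂ) + (-1 : ℂ) * z + (-1 : ℂ) * z ^ 2 + (-1 : ℂ) * z ^ 3, (1 : ℂ) + (1 : ℂ) * z ^ 2 + (1 :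 ℂ) * z ^ 3])).2) (Sc z)
      rw [Matrix.smul_vecMul, vecMulS, hzi, smul_pair, smul_pair]
      exact (pair_eq (by linear_combination (s * ((0 : ℂ))) * hrel) (by linear_combination (s * ((-1 : ℂ) + (-1 : ℂ) * z + (-1 : ℂ) * z ^ 2)) * hrel)).symm
    · refine ⟨(s * ((1 : ℂ) + (1 : ℂ) * z + (1 : ℂ) * z ^ 2 + (1 : ℂ) * z ^ 3), ![(1 : ℂ) * z ^ 3, (1 : ℂ) + (1 : ℂ) * z ^ 2]), ⟨by show (s * ((1 : ℂ) + (1 : ℂ) * z + (1 : ℂ) * z ^ 2 + (1 : ℂ) * z ^ 3)) ^ 10 = 1; rw [mul_pow, hs2, one_mul]; linear_combination ((10 : ℂ) * z + (45 : ℂ) * z ^ 2 + (165 : ℂ) * z ^ 3 + (485 : ℂ) * z ^ 4 + (1197 : ℂ) * z ^ 5 + (2563 : ℂ) * z ^ 6 + (4830 : ℂ) * z ^ 7 + (8130 : ℂ) * z ^ 8 + (12330 : ℂ) * z ^ 9 + (16950 : ℂ) * z ^ 10 + (21220 : ℂ) * z ^ 11 + (24255 : ℂ) * z ^ 12 + (25355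 : ℂ) * z ^ 13 + (24255 : ℂ) * z ^ 14 + (21219 : ℂ) * z ^ 15 + (16951 : ℂ) * z ^ 16 + (12330 : ℂ) * z ^ 17 + (8130 : ℂ) * z ^ 18 + (4830 : ℂ) * z ^ 19 + (2562 : ℂ) * z ^ 20 + (1198 : ℂ) * z ^ 21 + (485 : ℂ) * z ^ 22 + (165 : ℂ) * z ^ 23 + (45 : ℂ) * z ^ 24 + (9 : ℂ) * z ^ 25 + (1 : ℂ) * z ^ 26) * hrel, Or.inr (Or.inr (Or.inr (Or.inl (rfl))))⟩, ?_⟩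
      show (s * ((1 : ℂ) + (1 : ℂ) * z + (1 : ℂ) * z ^ 2 + (1 : ℂ) * z ^ 3)) • (![(1 : ℂ) * z ^ 3, (1 : ℂ) + (1 : ℂ) * z ^ 2]) = Matrix.vecMul ((s, (![(1 : ℂ) + (1 : ℂ) * z ^ 2, (-1 : ℂ) * z ^ 2])).1 • (s, (![(1 : ℂ) + (1 : ℂ) * z ^ 2, (-1 : ℂ) * z ^ 2])).2) (Sc z)
      rw [Matrix.smul_vecMul, vecMulS, hzi, smul_pair, smul_pair]
      exact (pair_eq (by linear_combination (s * ((-1 : ℂ) * z ^ 2)) * hrel) (by linear_combination (s * ((0 : ℂ))) * hrel)).symm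
    · refine ⟨(s * ((1 : ℂ) + (1 : ℂ) * z + (1 : ℂ) * z ^ 2 + (1 : ℂ) * z ^ 3), ![(-1 : ℂ) + (-1 : ℂ) * z + (-1 : ℂ) * z ^ 2 + (-1 : ℂ) * z ^ 3, (1 : ℂ) + (1 : ℂ) * z ^ 2 + (1 : ℂ) * z ^ 3]), ⟨by show (s * ((1 : ℂ) + (1 : ℂ) * z + (1 : ℂ) * z ^ 2 + (1 : ℂ) * z ^ 3)) ^ 10 = 1; rw [mul_pow, hs2, one_mul]; linear_combination ((10 : ℂ) * z + (45 : ℂ) * z ^ 2 + (165 : ℂ) * z ^ 3 + (485 : ℂ) * z ^ 4 + (1197 : ℂ) * z ^ 5 + (2563 : ℂ) * z ^ 6 + (4830 : ℂ) * z ^ 7 + (8130 : ℂ) * z ^ 8 + (12330 : ℂ) * z ^ 9 + (16950 : ℂ) * z ^ 10 + (21220 : ℂ) * z ^ 11 + (24255 : ℂ) * z ^ 12 + (25355 : ℂ) * z ^ 13 + (24255 : ℂ) * z ^ 14 + (21219 : ℂ) * z ^ 15 + (16951 : ℂ) * z ^ 16 + (12330 : ℂ) * z ^ 17 + (8130 :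 ℂ) * z ^ 18 + (4830 : ℂ) * z ^ 19 + (2562 : ℂ) * z ^ 20 + (1198 : ℂ) * z ^ 21 + (485 : ℂ) * z ^ 22 + (165 : ℂ) * z ^ 23 + (45 : ℂ) * z ^ 24 + (9 : ℂ) * z ^ 25 + (1 : ℂ) * z ^ 26) * hrel, Or.inr (Or.inr (Or.inr (Or.inr (Or.inr (Or.inl (rfl))))))⟩, ?_⟩
      show (s * ((1 : ℂ) + (1 : ℂ) * z + (1 : ℂ) * z ^ 2 + (1 : ℂ) * z ^ 3)) • (![(-1 : ℂ) + (-1 : ℂ) * z + (-1 : ℂ) * z ^ 2 + (-1 : ℂ) * z ^ 3, (1 : ℂ) + (1 : ℂ) * z ^ 2 + (1 : ℂ) * z ^ 3]) = Matrix.vecMul ((s, (![(1 : ℂ) + (1 : ℂ) * z ^ 2 + (1 : ℂ) * z ^ 3, (-1 : ℂ) * z ^ 3])).1 • (s, (![(1 : ℂ) + (1 : ℂ) * z ^ 2 + (1 : ℂ) * z ^ 3, (-1 : ℂ) * z ^ 3])).2) (Sc z)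
      rw [Matrix.smul_vecMul, vecMulS, hzi, smul_pair, smul_pair]
      exact (pair_eq (by linear_combination (s * ((1 : ℂ) + (1 : ℂ) * z + (1 : ℂ) * z ^ 2)) * hrel) (by linear_combination (s * ((0 : ℂ))) * hrel)).symm
    · refine ⟨(s * ((1 : ℂ)), ![(1 : ℂ) + (1 : ℂ) * z ^ 2, (-1 : ℂ) + (-1 : ℂ) * z ^ 2 + (-1 : ℂ) * z ^ 3]), ⟨by show (s * ((1 : ℂ))) ^ 10 = 1; rw [mul_pow, hs2, one_mul]; linear_combination ((0 : ℂ)) * hrel, Or.inr (Or.inr (Or.inr (Or.inr (Or.inr (Or.inr (Or.inr (Or.inr (Or.inr (Or.inr (Or.inl (rfl)))))))))))⟩, ?_⟩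
      show (s * ((1 : ℂ))) • (![(1 : ℂ) + (1 : ℂ) * z ^ 2, (-1 : ℂ) + (-1 : ℂ) * z ^ 2 + (-1 : ℂ) * z ^ 3]) = Matrix.vecMul ((s, (![(-1 : ℂ) + (-1 : ℂ) * z ^ 2, (1 : ℂ) + (1 : ℂ) * z ^ 2])).1 • (s, (![(-1 : ℂ) + (-1 : ℂ) * z ^ 2, (1 : ℂ) + (1 : ℂ) * z ^ 2])).2) (Sc z)
      rw [Matrix.smul_vecMul, vecMulS, hzi, smul_pair, smul_pair]
      exact (pair_eq (by linear_combination (s * ((0 : ℂ))) * hrel) (by linear_combination (s * ((-1 : ℂ) * z)) * hrel)).symm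
    · refine ⟨(s * ((1 : ℂ)), ![(0 : ℂ), (1 : ℂ) + (1 : ℂ) * z ^ 2]), ⟨by show (s * ((1 : ℂ))) ^ 10 = 1; rw [mul_pow, hs2, one_mul]; linear_combination ((0 : ℂ)) * hrel, Or.inr (Or.inr (Or.inr (Or.inr (Or.inr (Or.inr (Or.inr (Or.inr (Or.inr (Or.inr (Or.inr (rfl)))))))))))⟩, ?_⟩
      show (s * ((1 : ℂ))) • (![(0 : ℂ), (1 : ℂ) + (1 : ℂ) * z ^ 2]) = Matrix.vecMul ((s, (![(-1 : ℂ) * z + (-1 : ℂ) * z ^ 3, (0 : ℂ)])).1 • (s, (![(-1 : ℂ) * z + (-1 : ℂ) * z ^ 3, (0 : ℂ)])).2) (Sc z)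
      rw [Matrix.smul_vecMul, vecMulS, hzi, smul_pair, smul_pair]
      exact (pair_eq (by linear_combination (s * ((0 : ℂ))) * hrel) (by linear_combination (s * ((-1 : ℂ) + (-1 : ℂ) * z ^ 2)) * hrel)).symm
    · refine ⟨(s * ((1 : ℂ) + (1 : ℂ) * z + (1 : ℂ) * z ^ 2 + (1 : ℂ) * z ^ 3), ![(-1 : ℂ) + (-1 : ℂ) * z ^ 2, (1 : ℂ) + (1 : ℂ) * z ^ 2]), ⟨by show (s * ((1 : ℂ) + (1 : ℂ) * z + (1 : ℂ) * z ^ 2 + (1 : ℂ) * z ^ 3)) ^ 10 = 1; rw [mul_pow, hs2, one_mul]; linear_combination ((10 : ℂ) * z + (45 : ℂ) * z ^ 2 + (165 : ℂ) * z ^ 3 + (485 : ℂ) * z ^ 4 + (1197 : ℂ) * z ^ 5 + (2563 : ℂ) * z ^ 6 + (4830 : ℂ) * z ^ 7 + (8130 : ℂ) * z ^ 8 + (12330 : ℂ) * z ^ 9 + (16950 : ℂ) * z ^ 10 + (21220 : ℂ) * z ^ 11 + (24255 : ℂ) * z ^ 12 + (25355 : ℂ) * z ^ 13 + (24255 : ℂ)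 * z ^ 14 + (21219 : ℂ) * z ^ 15 + (16951 : ℂ) * z ^ 16 + (12330 : ℂ) * z ^ 17 + (8130 : ℂ) * z ^ 18 + (4830 : ℂ) * z ^ 19 + (2562 : ℂ) * z ^ 20 + (1198 : ℂ) * z ^ 21 + (485 : ℂ) * z ^ 22 + (165 : ℂ) * z ^ 23 + (45 : ℂ) * z ^ 24 + (9 : ℂ) * z ^ 25 + (1 : ℂ) * z ^ 26) * hrel, Or.inr (Or.inr (Or.inr (Or.inr (Or.inr (Or.inr (Or.inr (Or.inr (Or.inl (rfl)))))))))⟩, ?_⟩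
      show (s * ((1 : ℂ) + (1 : ℂ) * z + (1 : ℂ) * z ^ 2 + (1 : ℂ) * z ^ 3)) • (![(-1 : ℂ) + (-1 : ℂ) * z ^ 2, (1 : ℂ) + (1 : ℂ) * z ^ 2]) = Matrix.vecMul ((s, (![(1 : ℂ) + (1 : ℂ) * z ^ 2, (-1 : ℂ) + (-1 : ℂ) * z ^ 2 + (-1 : ℂ) * z ^ 3])).1 • (s, (![(1 : ℂ) + (1 : ℂ) * z ^ 2, (-1 : ℂ) + (-1 : ℂ) * z ^ 2 + (-1 : ℂ) * z ^ 3])).2) (Sc z)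
      rw [Matrix.smul_vecMul, vecMulS, hzi, smul_pair, smul_pair]
      exact (pair_eq (by linear_combination (s * ((1 : ℂ) * z)) * hrel) (by linear_combination (s * ((0 : ℂ))) * hrel)).symm
    · refine ⟨(s * ((1 : ℂ) + (1 : ℂ) * z + (1 : ℂ) * z ^ 2 + (1 : ℂ) * z ^ 3), ![(-1 : ℂ) * z + (-1 : ℂ) * z ^ 3, (0 : ℂ)]), ⟨by show (s * ((1 : ℂ) + (1 : ℂ) * z + (1 : ℂ) * z ^ 2 + (1 : ℂ) * z ^ 3)) ^ 10 = 1; rw [mul_pow, hs2, one_mul]; linear_combination ((10 : ℂ) * z + (45 : ℂ) * z ^ 2 + (165 : ℂ) * z ^ 3 + (485 : ℂ) * z ^ 4 + (1197 : ℂ) * z ^ 5 + (2563 : ℂ) * z ^ 6 + (4830 : ℂ) * z ^ 7 + (8130 : ℂ) * z ^ 8 + (12330 : ℂ) * z ^ 9 + (16950 : ℂ) * z ^ 10 + (21220 : ℂ) * z ^ 11 + (24255 : ℂ) * z ^ 12 + (25355 : ℂ) * z ^ 13 + (24255 : ℂ) * z ^ 14 + (21219 : ℂ) * z ^ 15 +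 (16951 : ℂ) * z ^ 16 + (12330 : ℂ) * z ^ 17 + (8130 : ℂ) * z ^ 18 + (4830 : ℂ) * z ^ 19 + (2562 : ℂ) * z ^ 20 + (1198 : ℂ) * z ^ 21 + (485 : ℂ) * z ^ 22 + (165 : ℂ) * z ^ 23 + (45 : ℂ) * z ^ 24 + (9 : ℂ) * z ^ 25 + (1 : ℂ) * z ^ 26) * hrel, Or.inr (Or.inr (Or.inr (Or.inr (Or.inr (Or.inr (Or.inr (Or.inr (Or.inr (Or.inl (rfl))))))))))⟩, ?_⟩
      show (s * ((1 : ℂ) + (1 : ℂ) * z + (1 : ℂ) * z ^ 2 + (1 : ℂ) * z ^ 3)) • (![(-1 : ℂ) * z + (-1 : ℂ) * z ^ 3, (0 : ℂ)]) = Matrix.vecMul ((s, (![(0 : ℂ), (1 : ℂ) + (1 : ℂ) * z ^ 2])).1 • (s, (![(0 : ℂ), (1 : ℂ) + (1 : ℂ) * z ^ 2])).2) (Sc z)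
      rw [Matrix.smul_vecMul, vecMulS, hzi, smul_pair, smul_pair]
      exact (pair_eq (by linear_combination (s * ((1 : ℂ) + (1 : ℂ) * z ^ 2)) * hrel) (by linear_combination (s * ((0 : ℂ))) * hrel)).symm

lemma orbit_fin_6 (z : ℂ) (hrel : z^2 - z + 1 = 0) :
    ∃ O : Set (Fin 2 → ℂ), O.Finite ∧ (![z, 1 - z] ∈ O) ∧
      (∀ v ∈ O, Matrix.vecMul v (Rc z) ∈ O) ∧ (∀ v ∈ O, Matrix.vecMul v (Sc z) ∈ O) := by
  have hzi : z⁻¹ = (1 : ℂ) + (-1 : ℂ) * z := (eq_inv_of_mul_eq_one_left (by linear_combination ((-1 : ℂ)) * hrel)).symm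
  refine ⟨(fun p : ℂ × (Fin 2 → ℂ) => p.1 • p.2) '' ({s : ℂ | s ^ 6 = 1} ×ˢ ({![(1 : ℂ) * z, (1 : ℂ) + (-1 : ℂ) * z]} : Set (Fin 2 → ℂ))), ?_, ?_, ?_, ?_⟩
  · exact Set.Finite.image _ (Set.Finite.prod (pow_eq_one_finite 6 (by norm_num)) (Set.finite_singleton _))
  · refine ⟨((1 : ℂ), ![(1 : ℂ) * z, (1 : ℂ) + (-1 : ℂ) * z]), ⟨one_pow 6, rfl⟩, ?_⟩
    show (1 : ℂ) • (![(1 : ℂ) * z, (1 : ℂ) + (-1 : ℂ) * z]) = ![z, 1 - z]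
    rw [one_smul]
    exact pair_eq (by linear_combination ((0 : ℂ)) * hrel) (by linear_combination ((0 : ℂ)) * hrel)
  · rintro x ⟨⟨s, w⟩, ⟨hs, hw⟩, rfl⟩
    have hs2 : s ^ 6 = 1 := hs
    simp only [Set.mem_insert_iff, Set.mem_singleton_iff] at hw
    rcases hw with rfl
    · refine ⟨(s * ((1 : ℂ) * z), ![(1 : ℂ) * z, (1 : ℂ) + (-1 : ℂ) * z]), ⟨by show (s * ((1 : ℂ) * z)) ^ 6 = 1; rw [mul_pow, hs2, one_mul]; linear_combination ((-1 : ℂ) + (-1 : ℂ) * z + (1 : ℂ) * z ^ 3 + (1 : ℂ) * z ^ 4) * hrel, rfl⟩, ?_⟩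
      show (s * ((1 : ℂ) * z)) • (![(1 : ℂ) * z, (1 : ℂ) + (-1 : ℂ) * z]) = Matrix.vecMul ((s, (![(1 : ℂ) * z, (1 : ℂ) + (-1 : ℂ) * z])).1 • (s, (![(1 : ℂ) * z, (1 : ℂ) + (-1 : ℂ) * z])).2) (Rc z)
      rw [Matrix.smul_vecMul, vecMulR, smul_pair, smul_pair]
      exact (pair_eq (by linear_combination (s * ((0 : ℂ))) * hrel) (by linear_combination (s * ((1 : ℂ))) * hrel)).symm
  · rintro x ⟨⟨s, w⟩, ⟨hs, hw⟩, rfl⟩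
    have hs2 : s ^ 6 = 1 := hs
    simp only [Set.mem_insert_iff, Set.mem_singleton_iff] at hw
    rcases hw with rfl
    · refine ⟨(s * ((-1 : ℂ) * z), ![(1 : ℂ) * z, (1 : ℂ) + (-1 : ℂ) * z]), ⟨by show (s * ((-1 : ℂ) * z)) ^ 6 = 1; rw [mul_pow, hs2, one_mul]; linear_combination ((-1 : ℂ) + (-1 : ℂ) * z + (1 : ℂ) * z ^ 3 + (1 : ℂ) * z ^ 4) * hrel, rfl⟩, ?_⟩
      show (s * ((-1 : ℂ) * z)) • (![(1 : ℂ) * z, (1 : ℂ) + (-1 : ℂ) * z]) = Matrix.vecMul ((s, (![(1 : ℂ) * z, (1 : ℂ) + (-1 : ℂ) * z])).1 • (s, (![(1 : ℂ) * z, (1 : ℂ) + (-1 : ℂ) * z])).2) (Sc z)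
      rw [Matrix.smul_vecMul, vecMulS, hzi, smul_pair, smul_pair]
      exact (pair_eq (by linear_combination (s * ((1 : ℂ))) * hrel) (by linear_combination (s * ((0 : ℂ))) * hrel)).symm

/- ### Deriving the cyclotomic relation -/

lemma rel_of_prim_2 {z : ℂ} (h : IsPrimitiveRoot z 2) : z + 1 = 0 := by
  have h2 := h.pow_eq_one
  have hne : z ≠ 1 := h.ne_one (by norm_num)
  have : (z - 1) * (z + 1) = 0 := by linear_combination h2
  rcases mul_eq_zero.mp this with h' | h'
  · exact absurd (by linear_combination h') hne
  · exact h'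

lemma rel_of_prim_3 {z : ℂ} (h : IsPrimitiveRoot z 3) : z ^ 2 + z + 1 = 0 := by
  have h2 := h.pow_eq_one
  have hne : z ≠ 1 := h.ne_one (by norm_num)
  have : (z - 1) * (z ^ 2 + z + 1) = 0 := by linear_combination h2
  rcases mul_eq_zero.mp this with h' | h'
  · exact absurd (by linear_combination h') hne
  · exact h'

lemma rel_of_prim_4 {z : ℂ} (h : IsPrimitiveRoot z 4) : z ^ 2 + 1 = 0 := by
  have h2 := h.pow_eq_one
  have hne : z ^ 2 ≠ 1 := h.pow_ne_one_of_pos_of_lt (by norm_num) (by norm_num)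
  have : (z ^ 2 - 1) * (z ^ 2 + 1) = 0 := by linear_combination h2
  rcases mul_eq_zero.mp this with h' | h'
  · exact absurd (by linear_combination h') hne
  · exact h'

lemma rel_of_prim_5 {z : ℂ} (h : IsPrimitiveRoot z 5) : z ^ 4 + z ^ 3 + z ^ 2 + z + 1 = 0 := by
  have h2 := h.pow_eq_one
  have hne : z ≠ 1 := h.ne_one (by norm_num)
  have : (z - 1) * (z ^ 4 + z ^ 3 + z ^ 2 + z + 1) = 0 := by linear_combination h2
  rcases mul_eq_zero.mp this with h' | h'
  · exact absurd (by linear_combination h') hne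
  · exact h'

lemma rel_of_prim_6 {z : ℂ} (h : IsPrimitiveRoot z 6) : z ^ 2 - z + 1 = 0 := by
  have h2 := h.pow_eq_one
  have hne3 : z ^ 3 ≠ 1 := h.pow_ne_one_of_pos_of_lt (by norm_num) (by norm_num)
  have hne2 : z ^ 2 ≠ 1 := h.pow_ne_one_of_pos_of_lt (by norm_num) (by norm_num)
  have h3 : z ^ 3 + 1 = 0 := by
    have : (z ^ 3 - 1) * (z ^ 3 + 1) = 0 := by linear_combination h2
    rcases mul_eq_zero.mp this with h' | h'
    · exact absurd (by linear_combination h') hne3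
    · exact h'
  have : (z + 1) * (z ^ 2 - z + 1) = 0 := by linear_combination h3
  rcases mul_eq_zero.mp this with h' | h'
  · exfalso
    apply hne2
    have hz : z = -1 := by linear_combination h'
    rw [hz]; ring
  · exact h'

/- ### The backward direction: finiteness at small roots of unity -/

lemma backward_finite (ζ : ℂ) (hζ : ζ ≠ 0)
    (RU SU : Matrix.GeneralLinearGroup (Fin 2) (LaurentPolynomial ℤ))
    (hRU : (RU : Matrix (Fin 2) (Fin 2) (LaurentPolynomial ℤ)) = Rq)
    (hSU : (SU : Matrix (Fin 2) (Fin 2) (LaurentPolynomial ℤ)) = Sq)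
    (evζ : LaurentPolynomial ℤ →+* ℂ) (hevζ : evζ (T 1) = ζ)
    (O : Set (Fin 2 → ℂ)) (hOfin : O.Finite) (he : ![ζ, 1 - ζ] ∈ O)
    (hR : ∀ v ∈ O, Matrix.vecMul v (Rc ζ) ∈ O)
    (hS : ∀ v ∈ O, Matrix.vecMul v (Sc ζ) ∈ O) :
    {z : ℂ | ∃ c : List ℕ, c ≠ [] ∧ (∀ x ∈ c, 2 ≤ x) ∧
        z = ζ * evζ ((Mq RU SU c : Matrix (Fin 2) (Fin 2) (LaurentPolynomial ℤ)) 0 0) +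
          (1 - ζ) * evζ ((Mq RU SU c : Matrix (Fin 2) (Fin 2) (LaurentPolynomial ℤ)) 1 0)}.Finite := by
  have horb := orbit_closure ζ O hR hS he
  refine Set.Finite.subset (Set.Finite.image (fun v => v 0) hOfin) ?_
  rintro x ⟨c, _, _, rfl⟩
  refine ⟨Matrix.vecMul ![ζ, 1 - ζ] (Nc ζ c), horb c, ?_⟩
  rw [ev_entry RU SU hRU hSU evζ ζ hevζ c 0 0, ev_entry RU SU hRU hSU evζ ζ hevζ c 1 0,
    vecMul2]
  simp

/- ### Values on single-entry lists -/

lemma Nc_single_00 (z : ℂ) (m : ℕ) : Nc z [m] 0 0 = ∑ i ∈ Finset.range m, z ^ i := by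
  simp [Nc, Rc_pow, Sc, Matrix.mul_apply, Fin.sum_univ_two]

lemma Nc_single_10 (z : ℂ) (m : ℕ) : Nc z [m] 1 0 = 1 := by
  simp [Nc, Rc_pow, Sc, Matrix.mul_apply, Fin.sum_univ_two]

/-- If `ζ` is not a nontrivial root of unity (of positive order), the value set is infinite. -/
lemma infinite_of_not_root (ζ : ℂ) (hζ : ζ ≠ 0)
    (RU SU : Matrix.GeneralLinearGroup (Fin 2) (LaurentPolynomial ℤ))
    (hRU : (RU : Matrix (Fin 2) (Fin 2) (LaurentPolynomial ℤ)) = Rq)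
    (hSU : (SU : Matrix (Fin 2) (Fin 2) (LaurentPolynomial ℤ)) = Sq)
    (evζ : LaurentPolynomial ℤ →+* ℂ) (hevζ : evζ (T 1) = ζ)
    (hroot : ∀ m : ℕ, 1 ≤ m → ζ ^ m ≠ 1) :
    {z : ℂ | ∃ c : List ℕ, c ≠ [] ∧ (∀ x ∈ c, 2 ≤ x) ∧
        z = ζ * evζ ((Mq RU SU c : Matrix (Fin 2) (Fin 2) (LaurentPolynomial ℤ)) 0 0) +
          (1 - ζ) * evζ ((Mq RU SU c : Matrix (Fin 2) (Fin 2) (LaurentPolynomial ℤ)) 1 0)}.Infinite := by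
  apply Set.infinite_of_injective_forall_mem
    (f := fun k : ℕ => ζ * (∑ i ∈ Finset.range (k + 2), ζ ^ i) + (1 - ζ))
  · intro a b hab
    simp only at hab
    have h1 : (∑ i ∈ Finset.range (a + 2), ζ ^ i) = ∑ i ∈ Finset.range (b + 2), ζ ^ i := by
      exact mul_left_cancel₀ hζ (by linear_combination hab)
    have h2 : ζ ^ (a + 2) = ζ ^ (b + 2) := by
      have := congrArg (fun w => w * (ζ - 1) + 1) h1
      simp only [geom_sum_mul] at this
      linear_combination this
    by_contra hne
    rcases Nat.lt_or_ge a b with hlt | hge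
    · have : ζ ^ (a + 2) * (ζ ^ (b - a) - 1) = 0 := by
        rw [mul_sub, ← pow_add, mul_one]
        rw [show a + 2 + (b - a) = b + 2 by omega, h2]
        ring
      rcases mul_eq_zero.mp this with h' | h'
      · exact pow_ne_zero _ hζ h'
      · exact hroot (b - a) (by omega) (by linear_combination h')
    · have hlt : b < a := by omega
      have : ζ ^ (b + 2) * (ζ ^ (a - b) - 1) = 0 := by
        rw [mul_sub, ← pow_add, mul_one]
        rw [show b + 2 + (a - b) = a + 2 by omega, ← h2]
        ring
      rcases mul_eq_zero.mp this with h' | h'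
      · exact pow_ne_zero _ hζ h'
      · exact hroot (a - b) (by omega) (by linear_combination h')
  · intro k
    refine ⟨[k + 2], by simp, by simp, ?_⟩
    rw [ev_entry RU SU hRU hSU evζ ζ hevζ _ 0 0, ev_entry RU SU hRU hSU evζ ζ hevζ _ 1 0,
      Nc_single_00, Nc_single_10, mul_one]

/-- The case `ζ = 1`. -/
lemma infinite_of_one
    (RU SU : Matrix.GeneralLinearGroup (Fin 2) (LaurentPolynomial ℤ))
    (hRU : (RU : Matrix (Fin 2) (Fin 2) (LaurentPolynomial ℤ)) = Rq)
    (hSU : (SU : Matrix (Fin 2) (Fin 2) (LaurentPolynomial ℤ)) = Sq)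
    (evζ : LaurentPolynomial ℤ →+* ℂ) (hevζ : evζ (T 1) = 1) :
    {z : ℂ | ∃ c : List ℕ, c ≠ [] ∧ (∀ x ∈ c, 2 ≤ x) ∧
        z = 1 * evζ ((Mq RU SU c : Matrix (Fin 2) (Fin 2) (LaurentPolynomial ℤ)) 0 0) +
          (1 - 1) * evζ ((Mq RU SU c : Matrix (Fin 2) (Fin 2) (LaurentPolynomial ℤ)) 1 0)}.Infinite := by
  apply Set.infinite_of_injective_forall_mem (f := fun k : ℕ => ((k : ℂ) + 2))
  · intro a b hab
    simp only at hab
    have : (a : ℂ) = b := by linear_combination hab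
    exact_mod_cast this
  · intro k
    refine ⟨[k + 2], by simp, by simp, ?_⟩
    rw [ev_entry RU SU hRU hSU evζ 1 hevζ _ 0 0, ev_entry RU SU hRU hSU evζ 1 hevζ _ 1 0,
      Nc_single_00, Nc_single_10]
    simp

/- ### Evaluation homomorphism at a unit -/

noncomputable def evAt (u : ℂˣ) : LaurentPolynomial ℤ →+* ℂ :=
  AddMonoidAlgebra.liftNCRingHom (Int.castRingHom ℂ)
    ((Units.coeHom ℂ).comp (zpowersHom ℂˣ u)) (fun _ _ => Commute.all _ _)

lemma evAt_T (u : ℂˣ) : evAt u (T 1) = (u : ℂ) := by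
  have h : (T 1 : LaurentPolynomial ℤ) = AddMonoidAlgebra.single (1 : ℤ) (1 : ℤ) := rfl
  rw [h]
  show AddMonoidAlgebra.liftNC _ _ _ = _
  rw [AddMonoidAlgebra.liftNC_single]
  simp

/- ### Evaluation of `toLaurent` -/

lemma ev_toLaurent (ev : LaurentPolynomial ℤ →+* ℂ) (z : ℂ) (hz : ev (T 1) = z)
    (p : Polynomial ℤ) : ev (Polynomial.toLaurent p) = Polynomial.aeval z p := by
  have hC : ∀ a : ℤ, ev (LaurentPolynomial.C a) = (a : ℂ) := by
    intro a
    have := RingHom.congr_fun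
      (Subsingleton.elim (ev.comp (LaurentPolynomial.C (R := ℤ))) (Int.castRingHom ℂ)) a
    simpa using this
  have key : ev.comp (Polynomial.toLaurent) = ((Polynomial.aeval z).toRingHom :
      Polynomial ℤ →+* ℂ) := by
    apply Polynomial.ringHom_ext
    · intro a
      simp only [RingHom.coe_comp, Function.comp_apply, Polynomial.toLaurent_C]
      rw [hC a]
      simp
    · simp only [RingHom.coe_comp, Function.comp_apply, Polynomial.toLaurent_X]
      rw [hz]
      simp
  exact RingHom.congr_fun key p

lemma ev_T_ne_zero (ev : LaurentPolynomial ℤ →+* ℂ) (m : ℤ) : ev (T m) ≠ 0 := by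
  intro h0
  have h : T m * T (-m) = (1 : LaurentPolynomial ℤ) := by
    rw [← T_add]; simp
  have := congrArg ev h
  rw [_root_.map_mul, _root_.map_one, h0, zero_mul] at this
  exact zero_ne_one this

/- ### The Galois transfer lemma -/

lemma transfer_zero (n : ℕ) (hn : 0 < n) (z z' : ℂ)
    (hz : IsPrimitiveRoot z n) (hz' : IsPrimitiveRoot z' n)
    (ev ev' : LaurentPolynomial ℤ →+* ℂ) (he : ev (T 1) = z) (he' : ev' (T 1) = z')
    (P : LaurentPolynomial ℤ) (hP : ev P = 0) : ev' P = 0 := by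
  obtain ⟨m, p, hp⟩ := P.exists_T_pow
  have h1 : Polynomial.aeval z p = 0 := by
    rw [← ev_toLaurent ev z he p, hp, _root_.map_mul, hP, zero_mul]
  -- move to ℚ coefficients
  have h2 : Polynomial.aeval z (p.map (Int.castRingHom ℚ)) = 0 := by
    rw [show (Int.castRingHom ℚ) = algebraMap ℤ ℚ from rfl, Polynomial.aeval_map_algebraMap]
    exact h1
  have h3 : minpoly ℚ z ∣ p.map (Int.castRingHom ℚ) := minpoly.dvd ℚ z h2
  rw [← Polynomial.cyclotomic_eq_minpoly_rat hz hn,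
    Polynomial.cyclotomic_eq_minpoly_rat hz' hn] at h3
  obtain ⟨r, hr⟩ := h3
  have h4 : Polynomial.aeval z' (p.map (Int.castRingHom ℚ)) = 0 := by
    rw [hr, _root_.map_mul, minpoly.aeval, zero_mul]
  have h5 : Polynomial.aeval z' p = 0 := by
    rw [show (Int.castRingHom ℚ) = algebraMap ℤ ℚ from rfl,
      Polynomial.aeval_map_algebraMap] at h4
    exact h4
  have h6 := ev_toLaurent ev' z' he' p
  rw [hp, _root_.map_mul] at h6
  rcases mul_eq_zero.mp (h6.trans h5) with h' | h'
  · exact h'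
  · exact absurd h' (ev_T_ne_zero ev' m)

/- ### The word [3,2]^k and its matrix -/

def myL : ℕ → List ℕ
  | 0 => []
  | k + 1 => 3 :: 2 :: myL k

lemma myL_ne_nil (k : ℕ) : myL (k + 1) ≠ [] := by simp [myL]

lemma myL_mem (k : ℕ) : ∀ x ∈ myL k, 2 ≤ x := by
  induction k with
  | zero => simp [myL]
  | succ k ih =>
      intro x hx
      simp only [myL, List.mem_cons] at hx
      rcases hx with rfl | rfl | hx
      · norm_num
      · norm_num
      · exact ih x hx

noncomputable def Fz (z : ℂ) : Matrix (Fin 2) (Fin 2) ℂ :=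
  !![1 + 2*z + z^2 + z^3, -(z + z^2 + z^3); 1 + z, -z]

lemma Fz_eq (z : ℂ) (hz : z ≠ 0) : (Rc z ^ 3 * Sc z) * (Rc z ^ 2 * Sc z) = Fz z := by
  have hinv : z * z⁻¹ = 1 := mul_inv_cancel₀ hz
  ext i j
  fin_cases i <;> fin_cases j <;>
      simp [Rc_pow, Sc, Fz, Matrix.mul_apply, Fin.sum_univ_two, Finset.sum_range_succ]
  all_goals field_simp
  all_goals ring

lemma Nc_myL (z : ℂ) (hz : z ≠ 0) (k : ℕ) : Nc z (myL k) = Fz z ^ k := by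
  induction k with
  | zero => simp [myL, Nc_nil]
  | succ k ih =>
      show Nc z (3 :: 2 :: myL k) = _
      rw [Nc_cons, Nc_cons, ih, ← Matrix.mul_assoc, Fz_eq z hz, pow_succ']

lemma Fz_CH (z : ℂ) :
    Fz z * Fz z = (1 + z + z^2 + z^3) • Fz z - (z^3) • (1 : Matrix (Fin 2) (Fin 2) ℂ) := by
  ext i j
  fin_cases i <;> fin_cases j <;>
      simp [Fz, Matrix.mul_apply, Fin.sum_univ_two, Matrix.one_apply]
  all_goals ring

/- ### Linear recurrences with distinct roots -/

lemma closed_form (t d lam mu : ℂ) (hsum : lam + mu = t) (hprod : lam * mu = d)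
    (hne : lam ≠ mu) (u : ℕ → ℂ) (hrec : ∀ k, u (k + 2) = t * u (k + 1) - d * u k) :
    ∀ k, u k = ((u 1 - mu * u 0) / (lam - mu)) * lam ^ k
      + ((lam * u 0 - u 1) / (lam - mu)) * mu ^ k := by
  have hd : lam - mu ≠ 0 := sub_ne_zero.mpr hne
  intro k
  induction k using Nat.twoStepInduction with
  | zero => field_simp; ring
  | one => field_simp; ring
  | more k ih1 ih2 =>
      rw [hrec k, ih1, ih2, ← hsum, ← hprod]
      field_simp
      ring

lemma quad_roots (t d : ℂ) : ∃ lam mu : ℂ, lam + mu = t ∧ lam * mu = d := by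
  obtain ⟨s, hs⟩ := Complex.isAlgClosed.exists_pow_nat_eq (t ^ 2 - 4 * d) (by norm_num : 0 < 2)
  exact ⟨(t + s) / 2, (t - s) / 2, by ring, by linear_combination (-1/4 : ℂ) * hs⟩

/- ### Growth contradiction -/

lemma not_finite_values (t d : ℂ) (ht : 2 < norm t) (hd : norm d = 1)
    (u : ℕ → ℂ) (hrec : ∀ k, u (k + 2) = t * u (k + 1) - d * u k) (hu0 : u 0 ≠ 0) :
    ¬ (Set.range fun k : ℕ => u (k + 1)).Finite := by
  intro hfin
  obtain ⟨l, m, hsum, hprod⟩ := quad_roots t d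
  obtain ⟨lam, mu, hsum, hprod, hle⟩ :
      ∃ lam mu : ℂ, lam + mu = t ∧ lam * mu = d ∧ norm mu ≤ norm lam := by
    rcases le_total (norm m) (norm l) with h | h
    · exact ⟨l, m, hsum, hprod, h⟩
    · exact ⟨m, l, by rw [← hsum]; ring, by rw [← hprod]; ring, h⟩
  have hprodabs : norm lam * norm mu = 1 := by
    rw [← norm_mul, hprod, hd]
  have hsumabs : 2 < norm lam + norm mu := by
    calc 2 < norm t := ht
    _ = norm (lam + mu) := by rw [hsum]
    _ ≤ norm lam + norm mu := norm_add_le _ _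
  have hlam1 : 1 < norm lam := by nlinarith [norm_nonneg lam, norm_nonneg mu]
  have hmu1 : norm mu < 1 := by nlinarith [norm_nonneg lam, norm_nonneg mu]
  have hmu0 : 0 < norm mu := by nlinarith
  have hne : lam ≠ mu := fun h => by rw [h] at hlam1; exact absurd (hlam1.trans hmu1) (lt_irrefl _)
  have hcf := closed_form t d lam mu hsum hprod hne u hrec
  set α := (u 1 - mu * u 0) / (lam - mu) with hα
  set β := (lam * u 0 - u 1) / (lam - mu) with hβ
  -- boundedness
  obtain ⟨C, hC⟩ : ∃ C, ∀ k : ℕ, norm (u (k + 1)) ≤ C := by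
    obtain ⟨C, hC⟩ := (hfin.image norm).bddAbove
    exact ⟨C, fun k => hC ⟨u (k + 1), ⟨k, rfl⟩, rfl⟩⟩
  have halpha : α = 0 := by
    by_contra hα0
    obtain ⟨k0, hk0⟩ := pow_unbounded_of_one_lt
      ((C + norm β) / norm α) hlam1
    have hk0' : (C + norm β) / norm α < norm lam ^ (k0 + 1) := by
      refine hk0.trans_le ?_
      exact pow_le_pow_right₀ (le_of_lt hlam1) (Nat.le_succ k0)
    have habs : norm α * norm lam ^ (k0 + 1) - norm β
        ≤ norm (u (k0 + 1)) := by
      rw [hcf (k0 + 1)]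
      have h1 : norm (α * lam ^ (k0 + 1)) = norm α * norm lam ^ (k0 + 1) := by
        rw [norm_mul, norm_pow]
      have h2 : norm (β * mu ^ (k0 + 1)) ≤ norm β := by
        rw [norm_mul, norm_pow]
        have hple : norm mu ^ (k0 + 1) ≤ 1 := pow_le_one₀ hmu0.le hmu1.le
        nlinarith [norm_nonneg β, pow_nonneg (norm_nonneg mu) (k0+1)]
      have h3 := norm_sub_norm_le (α * lam ^ (k0 + 1)) (-(β * mu ^ (k0 + 1)))
      rw [sub_neg_eq_add, norm_neg] at h3
      linarith
    have hα0' : 0 < norm α := by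
      rcases (norm_nonneg α).lt_or_eq with h | h
      · exact h
      · exact absurd (norm_eq_zero.mp h.symm) hα0
    have : C + norm β < norm α * norm lam ^ (k0 + 1) := by
      rw [div_lt_iff₀ hα0'] at hk0'
      linarith [hk0']
    linarith [hC k0, habs]
  have hbeta : β ≠ 0 := by
    intro hβ0
    have := hcf 0
    rw [halpha, hβ0] at this
    simp at this
    exact hu0 this
  -- injectivity
  have hinj : Function.Injective (fun k : ℕ => u (k + 1)) := by
    intro j k hjk
    simp only at hjk
    rw [hcf (j + 1), hcf (k + 1), halpha] at hjk
    simp only [zero_mul, zero_add] at hjk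
    have h2 : mu ^ (j + 1) = mu ^ (k + 1) := mul_left_cancel₀ hbeta hjk
    have h3 : norm mu ^ (j + 1) = norm mu ^ (k + 1) := by
      rw [← norm_pow, ← norm_pow, h2]
    by_contra hne'
    rcases Nat.lt_or_ge j k with hlt | hge
    · have := pow_lt_pow_right_of_lt_one₀ hmu0 hmu1 (by omega : j + 1 < k + 1)
      rw [h3] at this
      exact lt_irrefl _ this
    · have hlt : k < j := by omega
      have := pow_lt_pow_right_of_lt_one₀ hmu0 hmu1 (by omega : k + 1 < j + 1)
      rw [h3] at this
      exact lt_irrefl _ this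
  exact absurd hfin (Set.infinite_range_of_injective hinj)

/- ### The trigonometric estimate at ζ₀ = exp(2πi/n), n ≥ 7 -/

lemma abs_one_add_exp (x : ℝ) :
    norm (1 + Complex.exp ((x : ℂ) * Complex.I)) ^ 2 = 2 + 2 * Real.cos x := by
  rw [Complex.sq_norm, Complex.normSq_apply]
  simp only [Complex.add_re, Complex.add_im, Complex.one_re, Complex.one_im,
    Complex.exp_ofReal_mul_I_re, Complex.exp_ofReal_mul_I_im]
  nlinarith [Real.sin_sq_add_cos_sq x]

lemma abs_t_gt (n : ℕ) (hn : 7 ≤ n) :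
    2 < norm (1 + Complex.exp (2 * Real.pi * Complex.I / n)
      + Complex.exp (2 * Real.pi * Complex.I / n) ^ 2
      + Complex.exp (2 * Real.pi * Complex.I / n) ^ 3) := by
  have hn0 : (0 : ℝ) < n := by positivity
  have hn7 : (7 : ℝ) ≤ n := by exact_mod_cast hn
  set θ : ℝ := 2 * Real.pi / n with hθ
  have hθpos : 0 < θ := by positivity
  have hπlt : Real.pi < 3.1416 := by
    have := Real.pi_lt_d6
    linarith
  have hπgt : 3.1415 < Real.pi := by
    have := Real.pi_gt_d6
    linarith
  have hθle : θ ≤ 2 * Real.pi / 7 := by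
    rw [hθ]
    gcongr
  have hθ09 : θ ≤ 0.8976 := by
    calc θ ≤ 2 * Real.pi / 7 := hθle
    _ ≤ 2 * 3.1416 / 7 := by linarith
    _ ≤ 0.8976 := by norm_num
  set z : ℂ := Complex.exp (2 * Real.pi * Complex.I / n) with hzdef
  have hz : z = Complex.exp ((θ : ℂ) * Complex.I) := by
    rw [hzdef]
    congr 1
    push_cast [hθ]
    field_simp
  have hz2 : z ^ 2 = Complex.exp (((2 * θ : ℝ) : ℂ) * Complex.I) := by
    rw [hz, ← Complex.exp_nat_mul]
    congr 1
    push_cast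
    ring
  have habs1 : norm (1 + z) ^ 2 = 2 + 2 * Real.cos θ := by
    rw [hz]
    exact_mod_cast abs_one_add_exp θ
  have habs2 : norm (1 + z ^ 2) ^ 2 = 2 + 2 * Real.cos (2 * θ) := by
    rw [hz2]
    exact_mod_cast abs_one_add_exp (2 * θ)
  have hfact : (1 : ℂ) + z + z ^ 2 + z ^ 3 = (1 + z) * (1 + z ^ 2) := by ring
  have habs : norm (1 + z + z ^ 2 + z ^ 3)
      = norm (1 + z) * norm (1 + z ^ 2) := by
    rw [hfact, norm_mul]
  have hcos2 : Real.cos (2 * θ) = 2 * Real.cos θ ^ 2 - 1 := Real.cos_two_mul θ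
  have hc : 1 - θ ^ 2 / 2 ≤ Real.cos θ := Real.one_sub_sq_div_two_le_cos
  have hc059 : (0.59 : ℝ) ≤ Real.cos θ := by nlinarith
  have hc1 : Real.cos θ ≤ 1 := Real.cos_le_one θ
  have hsq : (norm (1 + z + z ^ 2 + z ^ 3)) ^ 2
      = (2 + 2 * Real.cos θ) * (2 + 2 * Real.cos (2 * θ)) := by
    rw [habs, mul_pow, habs1, habs2]
  nlinarith [norm_nonneg (1 + z + z ^ 2 + z ^ 3), hsq]

lemma abs_zeta0 (n : ℕ) (hn : n ≠ 0) :
    norm (Complex.exp (2 * Real.pi * Complex.I / n)) = 1 := by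
  have hn0 : (0:ℝ) < n := by positivity
  have h : (2 * Real.pi * Complex.I / n) = ((2 * Real.pi / n : ℝ) : ℂ) * Complex.I := by
    push_cast
    field_simp
  rw [h, Complex.norm_exp_ofReal_mul_I]

/- ### The main case: primitive n-th root with n ≥ 7 -/

lemma infinite_of_ge7 (ζ : ℂ) (hζ : ζ ≠ 0)
    (RU SU : Matrix.GeneralLinearGroup (Fin 2) (LaurentPolynomial ℤ))
    (hRU : (RU : Matrix (Fin 2) (Fin 2) (LaurentPolynomial ℤ)) = Rq)
    (hSU : (SU : Matrix (Fin 2) (Fin 2) (LaurentPolynomial ℤ)) = Sq)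
    (evζ : LaurentPolynomial ℤ →+* ℂ) (hevζ : evζ (T 1) = ζ)
    (n : ℕ) (hn : 7 ≤ n) (hprim : IsPrimitiveRoot ζ n) :
    ¬ {z : ℂ | ∃ c : List ℕ, c ≠ [] ∧ (∀ x ∈ c, 2 ≤ x) ∧
        z = ζ * evζ ((Mq RU SU c : Matrix (Fin 2) (Fin 2) (LaurentPolynomial ℤ)) 0 0) +
          (1 - ζ) * evζ ((Mq RU SU c : Matrix (Fin 2) (Fin 2) (LaurentPolynomial ℤ)) 1 0)}.Finite := by
  intro hfin
  set ζ₀ : ℂ := Complex.exp (2 * Real.pi * Complex.I / n) with hζ₀def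
  have hprim0 : IsPrimitiveRoot ζ₀ n := Complex.isPrimitiveRoot_exp n (by omega)
  have hζ₀ne : ζ₀ ≠ 0 := Complex.exp_ne_zero _
  set ev' : LaurentPolynomial ℤ →+* ℂ := evAt (Units.mk0 ζ₀ hζ₀ne) with hev'def
  have he' : ev' (T 1) = ζ₀ := evAt_T _
  set t : ℂ := 1 + ζ₀ + ζ₀ ^ 2 + ζ₀ ^ 3 with htdef
  set d : ℂ := ζ₀ ^ 3 with hddef
  set useq : ℕ → ℂ := fun k => ζ₀ * (Fz ζ₀ ^ k) 0 0 + (1 - ζ₀) * (Fz ζ₀ ^ k) 1 0 with husdef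
  have hFpow : ∀ k : ℕ, Fz ζ₀ ^ (k + 2)
      = t • Fz ζ₀ ^ (k + 1) - d • Fz ζ₀ ^ k := by
    intro k
    have h1 : Fz ζ₀ ^ (k + 2) = (Fz ζ₀ * Fz ζ₀) * Fz ζ₀ ^ k := by
      rw [show k + 2 = 2 + k by omega, pow_add]
      congr 1
      rw [pow_two]
    rw [h1, Fz_CH, sub_mul, Matrix.smul_mul, Matrix.smul_mul, one_mul, ← pow_succ']
  have hrec : ∀ k, useq (k + 2) = t * useq (k + 1) - d * useq k := by
    intro k
    simp only [husdef, hFpow k, Matrix.sub_apply, Matrix.smul_apply, smul_eq_mul]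
    ring
  have hu0 : useq 0 = ζ₀ := by
    simp only [husdef, pow_zero, Matrix.one_apply]
    norm_num
  have hu0ne : useq 0 ≠ 0 := by rw [hu0]; exact hζ₀ne
  have ht : 2 < norm t := abs_t_gt n hn
  have hd : norm d = 1 := by
    rw [hddef, norm_pow, abs_zeta0 n (by omega), one_pow]
  -- the Laurent polynomial family
  set P : List ℕ → LaurentPolynomial ℤ := fun c =>
    T 1 * ((Mq RU SU c : Matrix (Fin 2) (Fin 2) (LaurentPolynomial ℤ)) 0 0)
      + (1 - T 1) * ((Mq RU SU c : Matrix (Fin 2) (Fin 2) (LaurentPolynomial ℤ)) 1 0)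
    with hPdef
  have hPev : ∀ (ev : LaurentPolynomial ℤ →+* ℂ) (z : ℂ), ev (T 1) = z → ∀ c,
      ev (P c) = z * Nc z c 0 0 + (1 - z) * Nc z c 1 0 := by
    intro ev z hz c
    simp only [hPdef, map_add, _root_.map_mul, map_sub, _root_.map_one, hz,
      ev_entry RU SU hRU hSU ev z hz]
  have huP : ∀ k, useq k = ev' (P (myL k)) := by
    intro k
    rw [hPev ev' ζ₀ he' (myL k), Nc_myL ζ₀ hζ₀ne k]
  set f : ℕ → ℂ := fun k => evζ (P (myL (k + 1))) with hfdef
  have hfS : ∀ k, f k ∈ {z : ℂ | ∃ c : List ℕ, c ≠ [] ∧ (∀ x ∈ c, 2 ≤ x) ∧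
      z = ζ * evζ ((Mq RU SU c : Matrix (Fin 2) (Fin 2) (LaurentPolynomial ℤ)) 0 0) +
        (1 - ζ) * evζ ((Mq RU SU c : Matrix (Fin 2) (Fin 2) (LaurentPolynomial ℤ)) 1 0)} := by
    intro k
    refine ⟨myL (k + 1), myL_ne_nil k, myL_mem (k + 1), ?_⟩
    simp only [hfdef, hPdef, map_add, _root_.map_mul, map_sub, _root_.map_one, hevζ]
  have htr : ∀ j k, f j = f k → useq (j + 1) = useq (k + 1) := by
    intro j k h
    have h0 : evζ (P (myL (j + 1)) - P (myL (k + 1))) = 0 := by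
      rw [map_sub, sub_eq_zero]
      exact h
    have h1 := transfer_zero n (by omega) ζ ζ₀ hprim hprim0 evζ ev' hevζ he' _ h0
    rw [map_sub, sub_eq_zero] at h1
    rw [huP (j + 1), huP (k + 1)]
    exact h1
  have hsub : Set.range (fun k : ℕ => useq (k + 1))
      ⊆ (fun x => useq (Function.invFun f x + 1)) '' {z : ℂ | ∃ c : List ℕ, c ≠ [] ∧
        (∀ x ∈ c, 2 ≤ x) ∧
        z = ζ * evζ ((Mq RU SU c : Matrix (Fin 2) (Fin 2) (LaurentPolynomial ℤ)) 0 0) +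
          (1 - ζ) * evζ ((Mq RU SU c : Matrix (Fin 2) (Fin 2) (LaurentPolynomial ℤ)) 1 0)} := by
    rintro x ⟨k, rfl⟩
    refine ⟨f k, hfS k, ?_⟩
    exact htr (Function.invFun f (f k)) k (Function.invFun_eq ⟨k, rfl⟩)
  have hrangefin : (Set.range fun k : ℕ => useq (k + 1)).Finite :=
    (hfin.image _).subset hsub
  exact not_finite_values t d ht hd useq hrec hu0ne hrangefin

theorem jones_values_finite_iff (ζ : ℂ) (hζ : ζ ≠ 0)
    (RU SU : Matrix.GeneralLinearGroup (Fin 2) (LaurentPolynomial ℤ))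
    (hRU : (RU : Matrix (Fin 2) (Fin 2) (LaurentPolynomial ℤ)) = Rq)
    (hSU : (SU : Matrix (Fin 2) (Fin 2) (LaurentPolynomial ℤ)) = Sq)
    (evζ : LaurentPolynomial ℤ →+* ℂ) (hevζ : evζ (T 1) = ζ) :
    {z : ℂ | ∃ c : List ℕ, c ≠ [] ∧ (∀ x ∈ c, 2 ≤ x) ∧
        z = ζ * evζ ((Mq RU SU c : Matrix (Fin 2) (Fin 2) (LaurentPolynomial ℤ)) 0 0) +
          (1 - ζ) * evζ ((Mq RU SU c : Matrix (Fin 2) (Fin 2) (LaurentPolynomial ℤ)) 1 0)}.Finite ↔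
      ∃ n ∈ ({2, 3, 4, 5, 6} : Set ℕ), IsPrimitiveRoot ζ n := by
  constructor
  · intro hfin
    by_contra hnot
    push_neg at hnot
    rcases Nat.lt_or_ge (orderOf ζ) 7 with hlt | hge
    · interval_cases h : orderOf ζ
      · -- orderOf ζ = 0 : not a root of unity
        have hroot : ∀ m : ℕ, 1 ≤ m → ζ ^ m ≠ 1 := by
          intro m hm habs
          have : IsOfFinOrder ζ := isOfFinOrder_iff_pow_eq_one.mpr ⟨m, by omega, habs⟩
          rw [← orderOf_pos_iff, h] at this
          omega
        exact (infinite_of_not_root ζ hζ RU SU hRU hSU evζ hevζ hroot) hfin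
      · -- orderOf ζ = 1 : ζ = 1
        have hone : ζ = 1 := orderOf_eq_one_iff.mp h
        subst hone
        exact (infinite_of_one RU SU hRU hSU evζ hevζ) hfin
      · exact hnot 2 (by simp) (h ▸ IsPrimitiveRoot.orderOf ζ)
      · exact hnot 3 (by simp) (h ▸ IsPrimitiveRoot.orderOf ζ)
      · exact hnot 4 (by simp) (h ▸ IsPrimitiveRoot.orderOf ζ)
      · exact hnot 5 (by simp) (h ▸ IsPrimitiveRoot.orderOf ζ)
      · exact hnot 6 (by simp) (h ▸ IsPrimitiveRoot.orderOf ζ)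
    · exact infinite_of_ge7 ζ hζ RU SU hRU hSU evζ hevζ (orderOf ζ) hge
        (IsPrimitiveRoot.orderOf ζ) hfin
  · rintro ⟨n, hn, hprim⟩
    simp only [Set.mem_insert_iff, Set.mem_singleton_iff] at hn
    rcases hn with rfl | rfl | rfl | rfl | rfl
    · obtain ⟨O, hOfin, he, hR, hS⟩ := orbit_fin_2 ζ (rel_of_prim_2 hprim)
      exact backward_finite ζ hζ RU SU hRU hSU evζ hevζ O hOfin he hR hS
    · obtain ⟨O, hOfin, he, hR, hS⟩ := orbit_fin_3 ζ (rel_of_prim_3 hprim)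
      exact backward_finite ζ hζ RU SU hRU hSU evζ hevζ O hOfin he hR hS
    · obtain ⟨O, hOfin, he, hR, hS⟩ := orbit_fin_4 ζ (rel_of_prim_4 hprim)
      exact backward_finite ζ hζ RU SU hRU hSU evζ hevζ O hOfin he hR hS
    · obtain ⟨O, hOfin, he, hR, hS⟩ := orbit_fin_5 ζ (rel_of_prim_5 hprim)
      exact backward_finite ζ hζ RU SU hRU hSU evζ hevζ O hOfin he hR hS
    · obtain ⟨O, hOfin, he, hR, hS⟩ := orbit_fin_6 ζ (rel_of_prim_6 hprim)
      exact backward_finite ζ hζ RU SU hRU hSU evζ hevζ O hOfin he hR hS
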